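/- arXiv:2306.02056 — 4 statements merged into one kernel-verified Lean document; each statement's English description precedes it below -/
import Mathlib

section
/- Let X be a δ-hyperbolic locally finite graph and let (x_n) and (y_n) be two geodesic rays converging to the same boundary point η. Then there exist T_0, T_1 ∈ ℕ with T_0, T_1 ≤ 2(d(x_0,y_0) + 3δ + 2) such that d(x_{T_0+n}, y_{T_1+n}) ≤ 5δ for every n ∈ ℕ. -/
namespace BA

open SimpleGraph

variable {V : Type*}

/-- A geodesic ray in a graph: consecutive vertices are adjacent and the graph
distance between the `m`-th and `n`-th vertices is `|m - n|`. -/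
def GeoRay (G : SimpleGraph V) (x : ℕ → V) : Prop :=
  (∀ n, G.Adj (x n) (x (n + 1))) ∧ ∀ m n, G.dist (x m) (x n) = Nat.dist m n

/-- A finite geodesic path of length `k`, recorded as a function `ℕ → V`
(only the values at indices `≤ k` are relevant). -/
def GeoSeg (G : SimpleGraph V) (p : ℕ → V) (k : ℕ) : Prop :=
  (∀ i < k, G.Adj (p i) (p (i + 1))) ∧
    ∀ i ≤ k, ∀ j ≤ k, G.dist (p i) (p j) = Nat.dist i j

/-- Two sequences of vertices are asymptotic iff their Hausdorff distance is
finite (expressed via walks, so it is meaningful in disconnected graphs). -/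
def Asymp (G : SimpleGraph V) (x y : ℕ → V) : Prop :=
  ∃ K : ℕ, (∀ n, ∃ m, ∃ w : G.Walk (x n) (y m), w.length ≤ K) ∧
    ∀ m, ∃ n, ∃ w : G.Walk (x n) (y m), w.length ≤ K

theorem asymp_refl (G : SimpleGraph V) (x : ℕ → V) : Asymp G x x :=
  ⟨0, fun n => ⟨n, Walk.nil, by simp⟩, fun n => ⟨n, Walk.nil, by simp⟩⟩

theorem asymp_symm {G : SimpleGraph V} {x y : ℕ → V} (h : Asymp G x y) : Asymp G y x := by
  obtain ⟨K, h1, h2⟩ := h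
  refine ⟨K, fun n => ?_, fun m => ?_⟩
  · obtain ⟨m, w, hw⟩ := h2 n
    exact ⟨m, w.reverse, by simpa using hw⟩
  · obtain ⟨n, w, hw⟩ := h1 m
    exact ⟨n, w.reverse, by simpa using hw⟩

theorem asymp_trans {G : SimpleGraph V} {x y z : ℕ → V} (h : Asymp G x y)
    (h' : Asymp G y z) : Asymp G x z := by
  obtain ⟨K1, h1, h2⟩ := h
  obtain ⟨K2, h3, h4⟩ := h'
  refine ⟨K1 + K2, fun n => ?_, fun p => ?_⟩
  · obtain ⟨m, w1, hw1⟩ := h1 n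
    obtain ⟨p, w2, hw2⟩ := h3 m
    exact ⟨p, w1.append w2, by rw [Walk.length_append]; omega⟩
  · obtain ⟨m, w2, hw2⟩ := h4 p
    obtain ⟨n, w1, hw1⟩ := h2 m
    exact ⟨n, w1.append w2, by rw [Walk.length_append]; omega⟩

/-- The setoid of geodesic rays up to asymptoticity; its quotient is the
(Gromov) boundary of the graph. -/
def asympSetoid (G : SimpleGraph V) : Setoid {x : ℕ → V // GeoRay G x} where
  r a b := Asymp G a.1 b.1
  iseqv := ⟨fun a => asymp_refl G a.1, fun h => asymp_symm h, fun h h' => asymp_trans h h'⟩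

/-- `δ`-hyperbolicity: every geodesic triangle is `δ`-thin, i.e. each side is
contained in the `δ`-neighbourhood of the union of the other two sides. -/
def DeltaThin (G : SimpleGraph V) (δ : ℝ) : Prop :=
  ∀ (a b c : ℕ) (p q r : ℕ → V), GeoSeg G p a → GeoSeg G q b → GeoSeg G r c →
    p a = q 0 → p 0 = r 0 → q b = r c → ∀ i ≤ c,
      ∃ j, (j ≤ a ∧ (G.dist (r i) (p j) : ℝ) ≤ δ) ∨
           (j ≤ b ∧ (G.dist (r i) (q j) : ℝ) ≤ δ)

/-- The Cayley graph of a group w.r.t. a (symmetric) set `S`. -/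
def cayley {G : Type*} [Group G] (S : Set G) : SimpleGraph G :=
  SimpleGraph.fromRel fun g h => g⁻¹ * h ∈ S

/-- The type of a path `(x_n)` in a Cayley graph: the sequence `x_n⁻¹ x_{n+1}`. -/
def typ {G : Type*} [Group G] (x : ℕ → G) : ℕ → G := fun n => (x n)⁻¹ * x (n + 1)

/-- Lexicographic order on sequences. -/
def lexLe {α : Type*} [LinearOrder α] (x y : ℕ → α) : Prop :=
  x = y ∨ ∃ n, (∀ m < n, x m = y m) ∧ x n < y n

/-- Lexicographic order on the first `k` entries of sequences. -/
def lexLeUpTo {α : Type*} [LinearOrder α] (k : ℕ) (x y : ℕ → α) : Prop :=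
  (∀ i < k, x i = y i) ∨ ∃ n < k, (∀ m < n, x m = y m) ∧ x n < y n

/-- `g` can be written as a product of at most `r` elements of `S`. -/
def wordLenLe {G : Type*} [Group G] (S : Set G) (g : G) (r : ℝ) : Prop :=
  ∃ l : List G, (∀ s ∈ l, s ∈ S) ∧ l.prod = g ∧ (l.length : ℝ) ≤ r

/-- The left shift on sequences. -/
def shift {α : Type*} (x : ℕ → α) : ℕ → α := fun n => x (n + 1)

/-- The graph on `ℕ → α` induced by the left shift: `x` adjacent to `y` iff
`s x = y` or `s y = x` (and `x ≠ y`). -/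
def shiftGraph (α : Type*) : SimpleGraph (ℕ → α) :=
  SimpleGraph.fromRel fun x y => shift x = y

/-- `ρ_s(x, y) ≤ r` for the graph metric `ρ_s` of the shift graph. -/
def shiftDistLe {α : Type*} (x y : ℕ → α) (r : ℝ) : Prop :=
  ∃ w : (shiftGraph α).Walk x y, (w.length : ℝ) ≤ r

/-- Tail equivalence of sequences. -/
def tailEquiv {α : Type*} (x y : ℕ → α) : Prop :=
  ∃ T0 T1 : ℕ, ∀ n, x (T0 + n) = y (T1 + n)

/-- A finite Borel equivalence relation. -/
def IsFiniteBorelEquiv {X : Type*} [MeasurableSpace X] (F : X → X → Prop) : Prop :=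
  Equivalence F ∧ MeasurableSet {p : X × X | F p.1 p.2} ∧ ∀ x, {y | F x y}.Finite

/-- A relation is hyperfinite if it is the union of an increasing sequence of
finite Borel equivalence relations. -/
def Hyperfinite {X : Type*} [MeasurableSpace X] (E : X → X → Prop) : Prop :=
  ∃ F : ℕ → X → X → Prop, (∀ n, IsFiniteBorelEquiv (F n)) ∧
    (∀ n x y, F n x y → F (n + 1) x y) ∧ ∀ x y, E x y ↔ ∃ n, F n x y

end BA


namespace BA

open SimpleGraph

section Aux

variable {V : Type*} {G : SimpleGraph V}

private lemma dist_getVert_le' (hconn : G.Connected) {u v : V} (w : G.Walk u v) (i d : ℕ) :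
    G.dist (w.getVert i) (w.getVert (i + d)) ≤ d := by
  induction d with
  | zero => simp
  | succ d ih =>
    by_cases h : i + d < w.length
    · have hadj := w.adj_getVert_succ h
      have h1 : G.dist (w.getVert (i+d)) (w.getVert (i+d+1)) ≤ 1 := by
        rw [← SimpleGraph.dist_eq_one_iff_adj] at hadj
        omega
      have h3 := hconn.dist_triangle (u := w.getVert i) (v := w.getVert (i+d))
        (w := w.getVert (i + (d+1)))
      have h4 : i + (d+1) = i + d + 1 := by omega
      rw [h4] at h3 ⊢
      omega
    · have h2 : w.getVert (i + (d+1)) = w.getVert (i + d) := by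
        rw [w.getVert_of_length_le (by omega), w.getVert_of_length_le (by omega)]
      rw [h2]; omega

private lemma exists_geoSeg (hconn : G.Connected) (u v : V) :
    ∃ p : ℕ → V, GeoSeg G p (G.dist u v) ∧ p 0 = u ∧ p (G.dist u v) = v := by
  obtain ⟨w, hw⟩ := hconn.exists_walk_length_eq_dist u v
  refine ⟨w.getVert, ⟨fun i hi => w.adj_getVert_succ (by omega), ?_⟩, w.getVert_zero, ?_⟩
  · intro i hi j hj
    have key : ∀ i j : ℕ, i ≤ j → j ≤ G.dist u v → G.dist (w.getVert i) (w.getVert j) = j - i := by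
      intro i j hij hj
      have h1 : G.dist (w.getVert i) (w.getVert j) ≤ j - i := by
        have := dist_getVert_le' hconn w i (j - i)
        rwa [show i + (j - i) = j by omega] at this
      have h2 : G.dist u (w.getVert i) ≤ i := by
        have := dist_getVert_le' hconn w 0 i
        simpa using this
      have h3 : G.dist (w.getVert j) v ≤ G.dist u v - j := by
        have := dist_getVert_le' hconn w j (w.length - j)
        rw [show j + (w.length - j) = w.length by omega, w.getVert_length] at this
        omega
      have h4 : G.dist u v ≤ G.dist u (w.getVert i) + G.dist (w.getVert i) (w.getVert j)
          + G.dist (w.getVert j) v := by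
        have t1 := hconn.dist_triangle (u := u) (v := w.getVert i) (w := v)
        have t2 := hconn.dist_triangle (u := w.getVert i) (v := w.getVert j) (w := v)
        omega
      omega
    rcases le_total i j with h | h
    · rw [key i j h hj, Nat.dist_eq_sub_of_le h]
    · rw [SimpleGraph.dist_comm, key j i h hi, Nat.dist_comm, Nat.dist_eq_sub_of_le h]
  · rw [← hw, w.getVert_length]

private lemma finite_ball (hconn : G.Connected) (hlf : ∀ v : V, (G.neighborSet v).Finite)
    (v : V) (r : ℕ) : {u | G.dist v u ≤ r}.Finite := by
  induction r with
  | zero =>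
    apply Set.Finite.subset (Set.finite_singleton v)
    intro u hu
    simp only [Set.mem_setOf_eq, Nat.le_zero] at hu
    have := (hconn.dist_eq_zero_iff (u := v) (v := u)).mp hu
    simp [this]
  | succ r ih =>
    have hsub : {u | G.dist v u ≤ r + 1} ⊆
        {u | G.dist v u ≤ r} ∪ ⋃ w ∈ {u | G.dist v u ≤ r}, G.neighborSet w := by
      intro u hu
      simp only [Set.mem_setOf_eq] at hu
      by_cases h : G.dist v u ≤ r
      · exact Or.inl h
      · have hd : G.dist v u = r + 1 := by omega
        obtain ⟨w, hw⟩ := hconn.exists_walk_length_eq_dist v u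
        rw [hd] at hw
        right
        refine Set.mem_biUnion (x := w.getVert r) ?_ ?_
        · have := dist_getVert_le' hconn w 0 r
          simpa using this
        · have : G.Adj (w.getVert r) (w.getVert (r+1)) := w.adj_getVert_succ (by omega)
          rwa [show r + 1 = w.length by omega, w.getVert_length] at this
    exact Set.Finite.subset (ih.union (ih.biUnion fun w _ => hlf w)) hsub

private lemma koenig (hconn : G.Connected) (hlf : ∀ v : V, (G.neighborSet v).Finite)
    (y0 : V) (t : ℕ → V)
    (hgrow : ∀ L : ℕ, {m : ℕ | G.dist y0 (t m) ≤ L}.Finite) :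
    ∃ z : ℕ → V, z 0 = y0 ∧ ∀ L N : ℕ, ∃ m, N ≤ m ∧ L ≤ G.dist y0 (t m) ∧
      ∃ p : ℕ → V, GeoSeg G p (G.dist y0 (t m)) ∧ p 0 = y0 ∧
        p (G.dist y0 (t m)) = t m ∧ ∀ i ≤ L, p i = z i := by
  set ℓ : ℕ → ℕ := fun m => G.dist y0 (t m) with hℓ
  have hPex : ∀ m : ℕ, ∃ p : ℕ → V, GeoSeg G p (ℓ m) ∧ p 0 = y0 ∧ p (ℓ m) = t m :=
    fun m => exists_geoSeg hconn y0 (t m)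
  choose P hPgeo hP0 hPend using hPex
  set Agr : ℕ → (ℕ → V) → Prop :=
    fun L f => {m | L ≤ ℓ m ∧ ∀ i ≤ L, P m i = f i}.Infinite with hAgrdef
  have step : ∀ L : ℕ, ∀ f : ℕ → V, ∃ g : ℕ → V,
      (∀ i ≤ L, g i = f i) ∧ (Agr L f → Agr (L+1) g) := by
    intro L f
    by_cases hA : Agr L f
    · set S' : Set ℕ := {m | L ≤ ℓ m ∧ ∀ i ≤ L, P m i = f i} \ {m | ℓ m ≤ L} with hS'
      have hS'inf : S'.Infinite := hA.diff (hgrow L)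
      have hmem : ∀ m ∈ S', P m (L+1) ∈ {u | G.dist y0 u ≤ L + 1} := by
        intro m hm
        obtain ⟨⟨h1, h2⟩, h3⟩ := hm
        simp only [Set.mem_setOf_eq] at h3 ⊢
        have hL1 : L + 1 ≤ ℓ m := by omega
        have := (hPgeo m).2 0 (by omega) (L+1) hL1
        rw [hP0 m] at this
        simp [this, Nat.dist]
      have : ∃ u ∈ {u | G.dist y0 u ≤ L + 1}, {m ∈ S' | P m (L+1) = u}.Infinite := by
        by_contra hcon
        push_neg at hcon
        have hfin : (⋃ u ∈ {u | G.dist y0 u ≤ L + 1}, {m ∈ S' | P m (L+1) = u}).Finite := by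
          apply Set.Finite.biUnion (finite_ball hconn hlf y0 (L+1))
          intro u hu
          exact hcon u hu
        refine hS'inf ?_
        apply hfin.subset
        intro m hm
        exact Set.mem_biUnion (hmem m hm) ⟨hm, rfl⟩
      obtain ⟨u, hu, huinf⟩ := this
      refine ⟨fun i => if i = L + 1 then u else f i, ?_, fun _ => ?_⟩
      · intro i hi
        have hne : ¬ i = L + 1 := by omega
        simp [hne]
      · apply huinf.mono
        rintro m ⟨⟨⟨h1, h2⟩, h3⟩, h4⟩
        simp only [Set.mem_setOf_eq] at h3 ⊢
        refine ⟨by omega, fun i hi => ?_⟩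
        rcases Nat.lt_or_ge i (L+1) with h | h
        · rw [if_neg (by omega)]; exact h2 i (by omega)
        · have : i = L + 1 := by omega
          subst this; simp [h4]
    · exact ⟨f, fun i _ => rfl, fun h => absurd h hA⟩
  choose g hg1 hg2 using step
  set F : ℕ → ℕ → V := fun L => Nat.rec (P 0) (fun L fL => g L fL) L with hF
  have hAgrF : ∀ L, Agr L (F L) := by
    intro L
    induction L with
    | zero =>
      apply Set.infinite_univ.mono
      intro m _
      refine ⟨by omega, fun i hi => ?_⟩
      have : i = 0 := by omega
      subst this
      show P m 0 = P 0 0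
      rw [hP0, hP0]
    | succ L ih => exact hg2 L (F L) ih
  have coher : ∀ L i, i ≤ L → F L i = F i i := by
    intro L
    induction L with
    | zero =>
      intro i hi
      have h0 : i = 0 := by omega
      subst h0; rfl
    | succ L ih =>
      intro i hi
      rcases Nat.lt_or_ge i (L+1) with h | h
      · have : F (L+1) i = F L i := hg1 L (F L) i (by omega)
        rw [this, ih i (by omega)]
      · have : i = L + 1 := by omega
        subst this; rfl
  refine ⟨fun i => F i i, by rw [← hP0 0]; rfl, ?_⟩
  intro L N
  obtain ⟨m, hmS, hmN⟩ := (hAgrF L).exists_gt N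
  obtain ⟨h1, h2⟩ := hmS
  exact ⟨m, by omega, h1, P m, hPgeo m, hP0 m, hPend m,
    fun i hi => by rw [h2 i hi, coher L i hi]⟩

end Aux

end BA

open BA in
/-- Two geodesic rays converging to the same boundary point of a
δ-hyperbolic locally finite graph eventually `5δ`-fellow-travel, after cutting
initial segments of controlled length. -/
theorem stmt1 {V : Type*} (G : SimpleGraph V) (hconn : G.Connected)
    (hlf : ∀ v : V, (G.neighborSet v).Finite) (δ : ℝ) (hδ : 0 < δ)
    (hhyp : DeltaThin G δ) (x y : ℕ → V)
    (hx : GeoRay G x) (hy : GeoRay G y)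
    (hasymp : Asymp G x y) :
    ∃ T0 T1 : ℕ, (T0 : ℝ) ≤ 2 * ((G.dist (x 0) (y 0) : ℝ) + 3 * δ + 2) ∧
      (T1 : ℝ) ≤ 2 * ((G.dist (x 0) (y 0) : ℝ) + 3 * δ + 2) ∧
      ∀ n : ℕ, (G.dist (x (T0 + n)) (y (T1 + n)) : ℝ) ≤ 5 * δ := by
  classical
  obtain ⟨K, hK1, -⟩ := hasymp
  set D : ℕ := G.dist (x 0) (y 0) with hD
  set β : ℕ := ⌊δ⌋₊ with hβ
  have hβδ : (β : ℝ) ≤ δ := by rw [hβ]; exact Nat.floor_le hδ.le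
  have hδβ : δ < (β : ℝ) + 1 := by rw [hβ]; exact Nat.lt_floor_add_one δ
  have flo : ∀ d : ℕ, (d : ℝ) ≤ δ → d ≤ β := by
    intro d h; rw [hβ]; exact Nat.le_floor h
  have tri : ∀ a b c : V, G.dist a c ≤ G.dist a b + G.dist b c :=
    fun a b c => hconn.dist_triangle
  have hcomm : ∀ a b : V, G.dist a b = G.dist b a := fun a b => SimpleGraph.dist_comm
  have hxd : ∀ m n : ℕ, G.dist (x m) (x n) = Nat.dist m n := hx.2
  have hyd : ∀ m n : ℕ, G.dist (y m) (y n) = Nat.dist m n := hy.2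
  have hxSeg : ∀ k : ℕ, GeoSeg G x k := fun k => ⟨fun i _ => hx.1 i, fun i _ j _ => hx.2 i j⟩
  have hySeg : ∀ k : ℕ, GeoSeg G y k := fun k => ⟨fun i _ => hy.1 i, fun i _ j _ => hy.2 i j⟩
  have hgrow : ∀ L : ℕ, {m : ℕ | G.dist (y 0) (x m) ≤ L}.Finite := by
    intro L
    apply (Set.finite_Iic (L + D)).subset
    intro m hm
    simp only [Set.mem_setOf_eq] at hm
    have h1 : G.dist (x 0) (x m) ≤ G.dist (x 0) (y 0) + G.dist (y 0) (x m) := tri _ _ _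
    rw [hxd 0 m, ← hD] at h1
    simp only [Set.mem_Iic]
    simp only [Nat.dist] at h1
    omega
  obtain ⟨z, hz0, hKP⟩ := koenig hconn hlf (y 0) x hgrow
  have zd : ∀ i k : ℕ, G.dist (z i) (z k) = Nat.dist i k := by
    intro i k
    obtain ⟨m, -, hLm, p, hpgeo, hp0, hpend, hpz⟩ := hKP (max i k) 0
    rw [← hpz i (le_max_left _ _), ← hpz k (le_max_right _ _)]
    exact hpgeo.2 i (le_trans (le_max_left _ _) hLm) k (le_trans (le_max_right _ _) hLm)
  have zy0 : ∀ k : ℕ, G.dist (y 0) (z k) = k := by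
    intro k
    rw [← hz0, zd 0 k]
    simp [Nat.dist]
  -- Claim B : far enough points of `x` are β-close to `z`
  have hB : ∀ t : ℕ, D + β + 1 ≤ t → ∃ jj : ℕ, G.dist (x t) (z jj) ≤ β := by
    intro t ht
    obtain ⟨m, hmt, hLm, p, hpgeo, hp0, hpend, hpz⟩ := hKP (t + D + β) t
    obtain ⟨g, hggeo, hg0, hgD⟩ := exists_geoSeg hconn (x 0) (y 0)
    rw [← hD] at hggeo hgD
    have key := hhyp D (G.dist (y 0) (x m)) m g p x hggeo hpgeo (hxSeg m)
      (by rw [hgD, hp0]) (by rw [hg0]) (by rw [hpend])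
    obtain ⟨jj, hcase⟩ := key t hmt
    rcases hcase with ⟨hjD, hdist⟩ | ⟨hjb, hdist⟩
    · exfalso
      have hd : G.dist (x t) (g jj) ≤ β := flo _ hdist
      have hgj : G.dist (x 0) (g jj) = jj := by
        have h0 := hggeo.2 0 (by omega) jj hjD
        rw [hg0] at h0; rw [h0]; simp [Nat.dist]
      have h1 : G.dist (x 0) (x t) ≤ G.dist (x 0) (g jj) + G.dist (g jj) (x t) := tri _ _ _
      rw [hgj, hxd 0 t, hcomm (g jj) (x t)] at h1
      simp only [Nat.dist] at h1
      omega
    · have hd : G.dist (x t) (p jj) ≤ β := flo _ hdist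
      have hpj : G.dist (y 0) (p jj) = jj := by
        have h0 := hpgeo.2 0 (by omega) jj hjb
        rw [hp0] at h0; rw [h0]; simp [Nat.dist]
      have h1 : G.dist (y 0) (p jj) ≤ G.dist (y 0) (x t) + G.dist (x t) (p jj) := tri _ _ _
      have h2 : G.dist (y 0) (x t) ≤ G.dist (y 0) (x 0) + G.dist (x 0) (x t) := tri _ _ _
      rw [hcomm (y 0) (x 0), ← hD, hxd 0 t] at h2
      rw [hpj] at h1
      have hjL : jj ≤ t + D + β := by
        simp only [Nat.dist] at h2
        omega
      refine ⟨jj, ?_⟩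
      rw [← hpz jj hjL]
      exact hd
  -- Claim C : far enough points of `z` are β-close to `x`
  have hC : ∀ N : ℕ, D + β + 1 ≤ N → ∃ w : ℕ, G.dist (z N) (x w) ≤ β := by
    intro N hN
    obtain ⟨m, hmN, hLm, p, hpgeo, hp0, hpend, hpz⟩ := hKP N N
    obtain ⟨g, hggeo, hg0, hgD⟩ := exists_geoSeg hconn (y 0) (x 0)
    have hDyx : G.dist (y 0) (x 0) = D := by rw [hcomm, ← hD]
    rw [hDyx] at hggeo hgD
    have key := hhyp D m (G.dist (y 0) (x m)) g x p hggeo (hxSeg m) hpgeo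
      (by rw [hgD]) (by rw [hg0, hp0]) (by rw [hpend])
    obtain ⟨jj, hcase⟩ := key N hLm
    rcases hcase with ⟨hjD, hdist⟩ | ⟨hjb, hdist⟩
    · exfalso
      have hd : G.dist (p N) (g jj) ≤ β := flo _ hdist
      have hgj : G.dist (y 0) (g jj) = jj := by
        have h0 := hggeo.2 0 (by omega) jj hjD
        rw [hg0] at h0; rw [h0]; simp [Nat.dist]
      have hpN : G.dist (y 0) (p N) = N := by
        have h0 := hpgeo.2 0 (by omega) N hLm
        rw [hp0] at h0; rw [h0]; simp [Nat.dist]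
      have h1 : G.dist (y 0) (p N) ≤ G.dist (y 0) (g jj) + G.dist (g jj) (p N) := tri _ _ _
      rw [hgj, hpN, hcomm (g jj) (p N)] at h1
      omega
    · have hd : G.dist (p N) (x jj) ≤ β := flo _ hdist
      refine ⟨jj, ?_⟩
      rw [← hpz N (le_refl N)]
      exact hd
  -- Claim A : `z` and `y` fellow-travel with zero offset
  have hA : ∀ s : ℕ, G.dist (z s) (y s) ≤ 2 * β := by
    intro s
    obtain ⟨w, hw⟩ := hC (s + D + 2*K + 4*β + 4) (by omega)
    obtain ⟨M, wk, hwk⟩ := hK1 w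
    have hxwyM : G.dist (x w) (y M) ≤ K := le_trans (SimpleGraph.dist_le wk) hwk
    have hlam : G.dist (z (s + D + 2*K + 4*β + 4)) (y M) ≤ β + K := by
      have h1 := tri (z (s + D + 2*K + 4*β + 4)) (x w) (y M)
      omega
    have hMN : s + D + 2*K + 4*β + 4 ≤ M + (β + K) := by
      have h1 := tri (y 0) (y M) (z (s + D + 2*K + 4*β + 4))
      rw [zy0, hyd 0 M, hcomm (y M)] at h1
      simp only [Nat.dist] at h1
      omega
    have hsM : s ≤ M := by omega
    obtain ⟨m, -, hLm, p, hpgeo, hp0, hpend, hpz⟩ := hKP (s + D + 2*K + 4*β + 4) 0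
    have zSeg : GeoSeg G z (s + D + 2*K + 4*β + 4) := by
      constructor
      · intro i hi
        rw [← hpz i (by omega), ← hpz (i+1) (by omega)]
        exact hpgeo.1 i (by omega)
      · intro i hi k hk
        rw [← hpz i hi, ← hpz k hk]
        exact hpgeo.2 i (by omega) k (by omega)
    obtain ⟨q, hqgeo, hq0, hqend⟩ := exists_geoSeg hconn (z (s + D + 2*K + 4*β + 4)) (y M)
    have key := hhyp (s + D + 2*K + 4*β + 4) (G.dist (z (s + D + 2*K + 4*β + 4)) (y M)) M
      z q y zSeg hqgeo (hySeg M) hq0.symm (by rw [hz0]) hqend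
    obtain ⟨jj, hcase⟩ := key s hsM
    rcases hcase with ⟨hjN, hdist⟩ | ⟨hjb, hdist⟩
    · have hd : G.dist (y s) (z jj) ≤ β := flo _ hdist
      have h7 : G.dist (y 0) (z jj) ≤ G.dist (y 0) (y s) + G.dist (y s) (z jj) := tri _ _ _
      have h8 : G.dist (y 0) (y s) ≤ G.dist (y 0) (z jj) + G.dist (z jj) (y s) := tri _ _ _
      rw [zy0, hyd 0 s] at h7 h8
      rw [hcomm (z jj) (y s)] at h8
      have h9 : G.dist (z s) (y s) ≤ G.dist (z s) (z jj) + G.dist (z jj) (y s) := tri _ _ _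
      rw [zd s jj, hcomm (z jj) (y s)] at h9
      simp only [Nat.dist] at h7 h8 h9
      omega
    · exfalso
      have h5 : G.dist (q jj) (y M) =
          G.dist (z (s + D + 2*K + 4*β + 4)) (y M) - jj := by
        have h0 := hqgeo.2 jj hjb _ (le_refl _)
        rw [hqend] at h0
        rw [h0, Nat.dist_eq_sub_of_le hjb]
      have n2 : G.dist (q jj) (y M) ≤ β + K := by omega
      have r1 : (G.dist (y s) (y M) : ℝ) ≤ (G.dist (y s) (q jj) : ℝ)
          + (G.dist (q jj) (y M) : ℝ) := by exact_mod_cast tri _ _ _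
      have n1 : G.dist (y s) (y M) = M - s := by
        rw [hyd s M, Nat.dist_eq_sub_of_le hsM]
      have n3 : s + D + K + 3*β + 4 ≤ M := by omega
      have r2 : ((M - s : ℕ) : ℝ) ≤ δ + ((β : ℝ) + (K : ℝ)) := by
        rw [n1] at r1
        have : ((G.dist (q jj) (y M) : ℕ) : ℝ) ≤ (β : ℝ) + (K : ℝ) := by
          exact_mod_cast n2
        linarith [hdist]
      have r3 : ((D + K + 3*β + 4 : ℕ) : ℝ) ≤ ((M - s : ℕ) : ℝ) := by
        exact_mod_cast (by omega : D + K + 3*β + 4 ≤ M - s)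
      push_cast at r3
      linarith [hδβ, Nat.cast_nonneg (α := ℝ) D]
  -- the offset function
  have hjex : ∀ n : ℕ, ∃ jj, G.dist (x (D + β + 1 + n)) (z jj) ≤ β :=
    fun n => hB (D + β + 1 + n) (by omega)
  choose j hj using hjex
  have hjlow : ∀ n, n + 1 ≤ j n := by
    intro n
    have h1 : G.dist (y 0) (x (D + β + 1 + n)) ≤ G.dist (y 0) (z (j n))
        + G.dist (z (j n)) (x (D + β + 1 + n)) := tri _ _ _
    have h2 : G.dist (x 0) (x (D + β + 1 + n)) ≤ G.dist (x 0) (y 0)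
        + G.dist (y 0) (x (D + β + 1 + n)) := tri _ _ _
    rw [zy0, hcomm (z (j n))] at h1
    rw [hxd, ← hD] at h2
    have h3 := hj n
    simp only [Nat.dist] at h2
    omega
  have hjhigh : ∀ n, j n ≤ n + 2*D + 2*β + 1 := by
    intro n
    have h1 : G.dist (y 0) (z (j n)) ≤ G.dist (y 0) (x (D + β + 1 + n))
        + G.dist (x (D + β + 1 + n)) (z (j n)) := tri _ _ _
    have h2 : G.dist (y 0) (x (D + β + 1 + n)) ≤ G.dist (y 0) (x 0)
        + G.dist (x 0) (x (D + β + 1 + n)) := tri _ _ _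
    rw [zy0] at h1
    rw [hcomm (y 0) (x 0), ← hD, hxd] at h2
    have h3 := hj n
    simp only [Nat.dist] at h2
    omega
  have claim1 : ∀ m n : ℕ, m + (D + 2*β + 1) ≤ n →
      j m + n ≤ j n + m + 2*β ∧ j n + m ≤ j m + n + 2*β := by
    intro m n hmn
    have e1 : G.dist (x (D + β + 1 + m)) (x (D + β + 1 + n))
        = Nat.dist (D + β + 1 + m) (D + β + 1 + n) := hxd _ _
    have e2 := zd (j m) (j n)
    have t1 : G.dist (x (D + β + 1 + m)) (x (D + β + 1 + n)) ≤
        G.dist (x (D + β + 1 + m)) (z (j m)) + G.dist (z (j m)) (z (j n))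
        + G.dist (z (j n)) (x (D + β + 1 + n)) := by
      have u1 := tri (x (D + β + 1 + m)) (z (j m)) (x (D + β + 1 + n))
      have u2 := tri (z (j m)) (z (j n)) (x (D + β + 1 + n))
      omega
    have t2 : G.dist (z (j m)) (z (j n)) ≤
        G.dist (z (j m)) (x (D + β + 1 + m))
        + G.dist (x (D + β + 1 + m)) (x (D + β + 1 + n))
        + G.dist (x (D + β + 1 + n)) (z (j n)) := by
      have u1 := tri (z (j m)) (x (D + β + 1 + m)) (z (j n))
      have u2 := tri (x (D + β + 1 + m)) (x (D + β + 1 + n)) (z (j n))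
      omega
    have h3 := hj m
    have h4 := hj n
    have l1 := hjlow n
    have l2 := hjhigh m
    rw [e1, e2] at t1 t2
    rw [hcomm (z (j n)) (x (D + β + 1 + n))] at t1
    rw [hcomm (z (j m)) (x (D + β + 1 + m))] at t2
    simp only [Nat.dist] at t1 t2
    omega
  -- pigeonhole for the offset
  have hpig : ∃ v : ℕ, v ≤ 2*D + 2*β + 1 ∧ {n : ℕ | j n = n + v}.Infinite := by
    by_contra hcon
    push_neg at hcon
    have hfin : (⋃ v ∈ Set.Iic (2*D + 2*β + 1), {n : ℕ | j n = n + v}).Finite :=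
      Set.Finite.biUnion (Set.finite_Iic _) fun v hv =>
        hcon v hv
    refine Set.infinite_univ (α := ℕ) (hfin.subset ?_)
    intro n _
    have l1 := hjlow n
    have l2 := hjhigh n
    refine Set.mem_biUnion (show j n - n ∈ Set.Iic (2*D + 2*β + 1) from ?_) ?_
    · simp only [Set.mem_Iic]; omega
    · simp only [Set.mem_setOf_eq]; omega
  obtain ⟨v, hv, hvinf⟩ := hpig
  refine ⟨D + β + 1, v, ?_, ?_, ?_⟩
  · push_cast
    linarith [hβδ, hδ, Nat.cast_nonneg (α := ℝ) D]
  · have : ((v : ℕ) : ℝ) ≤ ((2*D + 2*β + 1 : ℕ) : ℝ) := by exact_mod_cast hv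
    push_cast at this
    push_cast
    linarith [hβδ, hδ, Nat.cast_nonneg (α := ℝ) D]
  · intro n
    obtain ⟨n', hn'set, hn'gt⟩ := hvinf.exists_gt (n + (D + 2*β + 1))
    simp only [Set.mem_setOf_eq] at hn'set
    have hc := claim1 n n' (by omega)
    rw [hn'set] at hc
    have hnat : G.dist (x (D + β + 1 + n)) (y (v + n)) ≤ 5*β := by
      have s1 : G.dist (x (D + β + 1 + n)) (y (v + n)) ≤
          G.dist (x (D + β + 1 + n)) (z (j n)) + G.dist (z (j n)) (z (v + n))
          + G.dist (z (v + n)) (y (v + n)) := by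
        have u1 := tri (x (D + β + 1 + n)) (z (j n)) (y (v + n))
        have u2 := tri (z (j n)) (z (v + n)) (y (v + n))
        omega
      have s2 := zd (j n) (v + n)
      have s3 := hA (v + n)
      have s4 := hj n
      rw [s2] at s1
      simp only [Nat.dist] at s1
      omega
    calc (G.dist (x (D + β + 1 + n)) (y (v + n)) : ℝ) ≤ ((5*β : ℕ) : ℝ) := by
          exact_mod_cast hnat
      _ ≤ 5 * δ := by push_cast; linarith [hβδ]
end

section
/- Let G be a hyperbolic group with finite symmetric generating set S, with Cay(G,S) δ-hyperbolic, and let ≤_lex-minimal types σ_ζ ∈ S^ℕ be assigned to each boundary point ζ as in the definition of Φ. Fix η ∈ ∂G and r > 0, let ρ be the Schreier graph metric on ∂G for the boundary action, ρ_s the shift-graph metric on S^ℕ, and M_{5δ} a bound on the size of balls of radius 5δ in Cay(G,S). Then the set {σ_ζ : ζ ∈ B_ρ(η,r)} can be partitioned into at most (M_{5δ})² sets each of ρ_s-diameter at most 8(r + 3δ + 2); in particular it meets at most (M_{5δ})² tail equivalence classes of S^ℕ. -/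
namespace BAaux
open BA SimpleGraph

variable {G : Type*} [Group G]

lemma cayley_adj {S : Set G} {a b : G} :
    (cayley S).Adj a b ↔ a ≠ b ∧ (a⁻¹ * b ∈ S ∨ b⁻¹ * a ∈ S) := by
  simp [cayley, fromRel_adj]

/-- Left multiplication as a graph homomorphism of the Cayley graph. -/
def mulHom (S : Set G) (g : G) : cayley S →g cayley S where
  toFun := fun x => g * x
  map_rel' := by
    intro a b hab
    rw [cayley_adj] at hab ⊢
    obtain ⟨hne, h⟩ := hab
    refine ⟨fun h' => hne (mul_left_cancel h'), ?_⟩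
    simpa [mul_assoc] using h

lemma reachable_mul (S : Set G) (g : G) {a b : G} (h : (cayley S).Reachable a b) :
    (cayley S).Reachable (g * a) (g * b) :=
  h.map (mulHom S g)

lemma dist_mul (S : Set G) (g a b : G) :
    (cayley S).dist (g * a) (g * b) = (cayley S).dist a b := by
  have key : ∀ (g a b : G), (cayley S).dist (g * a) (g * b) ≤ (cayley S).dist a b := by
    intro g a b
    by_cases h : (cayley S).Reachable a b
    · obtain ⟨w, hw⟩ := h.exists_walk_length_eq_dist
      calc (cayley S).dist (g * a) (g * b) ≤ (w.map (mulHom S g)).length := dist_le _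
        _ = (cayley S).dist a b := by rw [Walk.length_map, hw]
    · have h' : ¬ (cayley S).Reachable (g * a) (g * b) := by
        intro hr
        exact h (by simpa [inv_mul_cancel_left] using reachable_mul S g⁻¹ hr)
      rw [dist_eq_zero_of_not_reachable h, dist_eq_zero_of_not_reachable h']
  refine le_antisymm (key g a b) ?_
  have h2 := key g⁻¹ (g * a) (g * b)
  simpa [inv_mul_cancel_left] using h2

lemma georay_mul (S : Set G) (g : G) {x : ℕ → G} (h : GeoRay (cayley S) x) :
    GeoRay (cayley S) (fun n => g * x n) := by
  refine ⟨fun n => (mulHom S g).map_adj (h.1 n), fun m n => ?_⟩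
  rw [dist_mul]; exact h.2 m n

lemma asymp_mul (S : Set G) (g : G) {x y : ℕ → G} (h : Asymp (cayley S) x y) :
    Asymp (cayley S) (fun n => g * x n) (fun n => g * y n) := by
  obtain ⟨K, h1, h2⟩ := h
  refine ⟨K, fun n => ?_, fun m => ?_⟩
  · obtain ⟨m, w, hw⟩ := h1 n
    exact ⟨m, w.map (mulHom S g), (Walk.length_map _ _).trans_le hw⟩
  · obtain ⟨n, w, hw⟩ := h2 m
    exact ⟨n, w.map (mulHom S g), (Walk.length_map _ _).trans_le hw⟩

lemma typ_mul (g : G) (x : ℕ → G) : typ (fun n => g * x n) = typ x := by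
  funext n
  simp [typ, mul_assoc]

lemma reachable_one (S : Set G) (hgen : Subgroup.closure S = ⊤) (g : G) :
    (cayley S).Reachable 1 g := by
  have hg : g ∈ Subgroup.closure S := by rw [hgen]; trivial
  refine Subgroup.closure_induction (p := fun g _ => (cayley S).Reachable 1 g)
    ?_ ?_ ?_ ?_ hg
  · intro x hx
    by_cases hx1 : x = 1
    · rw [hx1]
    · exact SimpleGraph.Adj.reachable (cayley_adj.mpr ⟨fun h => hx1 h.symm, Or.inl (by simpa)⟩)
  · exact Reachable.refl 1
  · intro x y _ _ ihx ihy
    exact ihx.trans (by simpa using reachable_mul S x ihy)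
  · intro x _ ih
    have := reachable_mul S x⁻¹ ih
    simp only [mul_one, inv_mul_cancel] at this
    exact this.symm

lemma cayley_connected (S : Set G) (hgen : Subgroup.closure S = ⊤) :
    (cayley S).Connected := by
  rw [connected_iff]
  refine ⟨fun a b => ?_, ⟨1⟩⟩
  have h1 := reachable_one S hgen (a⁻¹ * b)
  have h2 := reachable_mul S a h1
  simpa [mul_inv_cancel_left] using h2

section Graph
variable {V : Type*} {Γ : SimpleGraph V}

lemma dist_tri (hconn : Γ.Connected) (u v w : V) : Γ.dist u w ≤ Γ.dist u v + Γ.dist v w :=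
  hconn.dist_triangle

lemma adj_dist_le {u v : V} (h : Γ.Adj u v) : Γ.dist u v ≤ 1 :=
  le_trans (dist_le (Walk.cons h Walk.nil)) (by simp)

/-- Extract a geodesic segment function between two vertices. -/
lemma exists_geoSeg (hconn : Γ.Connected) (u v : V) :
    ∃ p : ℕ → V, GeoSeg Γ p (Γ.dist u v) ∧ p 0 = u ∧ p (Γ.dist u v) = v := by
  obtain ⟨w, hw⟩ := (hconn u v).exists_walk_length_eq_dist
  have chain : ∀ i j, i ≤ j → j ≤ w.length → Γ.dist (w.getVert i) (w.getVert j) ≤ j - i := by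
    intro i j hij
    induction j with
    | zero => intro _; have : i = 0 := by omega
              subst this; simp
    | succ j ih =>
      intro hj1
      rcases Nat.lt_or_ge i (j+1) with hlt | hge
      · have hij' : i ≤ j := by omega
        have h1 := ih hij' (by omega)
        have h2 : Γ.dist (w.getVert j) (w.getVert (j+1)) ≤ 1 :=
          adj_dist_le (w.adj_getVert_succ (by omega))
        have h3 := dist_tri hconn (w.getVert i) (w.getVert j) (w.getVert (j+1))
        omega
      · have : i = j + 1 := by omega
        subst this; simp
  refine ⟨w.getVert, ⟨fun i hi => w.adj_getVert_succ (by rw [hw]; omega), ?_⟩,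
    w.getVert_zero, by rw [← hw]; exact w.getVert_length⟩
  intro i hi j hj
  -- prove dist (getVert i) (getVert j) = Nat.dist i j
  have main : ∀ i j, i ≤ j → j ≤ w.length → Γ.dist (w.getVert i) (w.getVert j) = j - i := by
    intro i j hij hj
    have hup := chain i j hij hj
    have hlow : Γ.dist u v ≤ i + Γ.dist (w.getVert i) (w.getVert j) + (w.length - j) := by
      have t1 : Γ.dist u (w.getVert i) ≤ i := by
        have := chain 0 i (by omega) (by omega)
        simpa using this
      have t2 : Γ.dist (w.getVert j) v ≤ w.length - j := by
        have := chain j w.length hj (le_refl _)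
        rw [w.getVert_length] at this
        exact this
      have t3 := dist_tri hconn u (w.getVert i) (w.getVert j)
      have t4 := dist_tri hconn u (w.getVert j) v
      omega
    rw [hw] at hlow
    omega
  rcases le_total i j with hij | hji
  · rw [main i j hij (by omega), Nat.dist_eq_sub_of_le hij]
  · rw [dist_comm, main j i hji (by omega), Nat.dist_comm, Nat.dist_eq_sub_of_le hji]

end Graph

end BAaux

namespace BAaux
open BA SimpleGraph

variable {G : Type*} [Group G]

lemma walk_mul_prod (S : Set G) (l : List G) (hl : ∀ s ∈ l, s ∈ S) (g : G) :
    ∃ w : (cayley S).Walk g (g * l.prod), w.length ≤ l.length := by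
  induction l generalizing g with
  | nil => exact ⟨Walk.nil.copy rfl (by simp), by rw [Walk.length_copy]; simp⟩
  | cons s t ih =>
    obtain ⟨w, hw⟩ := ih (fun x hx => hl x (List.mem_cons_of_mem _ hx)) (g * s)
    have hcast : (g * s) * t.prod = g * (s :: t).prod := by
      simp [List.prod_cons, mul_assoc]
    by_cases hs : s = 1
    · refine ⟨w.copy (by simp [hs]) hcast, ?_⟩
      rw [Walk.length_copy]; simp; omega
    · have hadj : (cayley S).Adj g (g * s) := by
        rw [cayley_adj]
        constructor
        · intro h
          apply hs
          nth_rewrite 1 [← mul_one g] at h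
          exact (mul_left_cancel h).symm
        · exact Or.inl (by simpa using hl s (List.mem_cons_self))
      refine ⟨(Walk.cons hadj w).copy rfl hcast, ?_⟩
      rw [Walk.length_copy]; simp; omega

lemma dist_one_of_word {S : Set G} {g : G} {r : ℝ} (h : wordLenLe S g r) :
    ((cayley S).dist 1 g : ℝ) ≤ r := by
  obtain ⟨l, hl, hprod, hlen⟩ := h
  obtain ⟨w, hw⟩ := walk_mul_prod S l hl 1
  have : (cayley S).dist 1 g ≤ l.length := by
    have hle := dist_le (w.copy rfl (by rw [one_mul, hprod]))
    rw [Walk.length_copy] at hle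
    exact le_trans hle hw
  calc ((cayley S).dist 1 g : ℝ) ≤ (l.length : ℝ) := by exact_mod_cast this
    _ ≤ r := hlen

/-- Lex order basic facts -/
lemma lexLe_antisymm {α : Type*} [LinearOrder α] {x y : ℕ → α}
    (h1 : lexLe x y) (h2 : lexLe y x) : x = y := by
  rcases h1 with h1 | ⟨n, hn, hlt⟩
  · exact h1
  rcases h2 with h2 | ⟨m, hm, hlt'⟩
  · exact h2.symm
  rcases lt_trichotomy n m with h | h | h
  · exact absurd (hm n h).symm (ne_of_lt hlt)
  · subst h; exact absurd hlt (not_lt_of_gt hlt')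
  · exact absurd (hn m h).symm (ne_of_lt hlt')

lemma lexLe_lt_of_ne {α : Type*} [LinearOrder α] {x y : ℕ → α} {k : ℕ}
    (h : lexLe x y) (hpre : ∀ i < k, x i = y i) (hne : x k ≠ y k) : x k < y k := by
  rcases h with h | ⟨n, hn, hlt⟩
  · exact absurd (congrFun h k) hne
  rcases lt_trichotomy n k with h1 | h1 | h1
  · exact absurd (hpre n h1) (ne_of_lt hlt)
  · subst h1; exact hlt
  · exact absurd (hn k h1) hne

/-- walks in the shift graph -/
lemma shift_walk {α : Type*} (u : ℕ → α) (a : ℕ) :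
    ∃ w : (shiftGraph α).Walk u (fun n => u (a + n)), w.length ≤ a := by
  induction a with
  | zero => exact ⟨Walk.nil.copy rfl (by funext n; simp), by simp⟩
  | succ a ih =>
    obtain ⟨w, hw⟩ := ih
    have hstep : shift (fun n => u (a + n)) = fun n => u (a + 1 + n) := by
      funext n; simp only [shift]; congr 1; omega
    by_cases heq : (fun n => u (a + n)) = (fun n => u (a + 1 + n))
    · exact ⟨w.copy rfl heq, by rw [Walk.length_copy]; omega⟩
    · have hadj : (shiftGraph α).Adj (fun n => u (a + n)) (fun n => u (a + 1 + n)) := by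
        simp only [shiftGraph, fromRel_adj]
        exact ⟨heq, Or.inl hstep⟩
      refine ⟨(w.concat hadj), ?_⟩
      rw [Walk.length_concat]; omega

lemma shiftDistLe_of_shift_eq {α : Type*} {u v : ℕ → α} {a b : ℕ} {c : ℝ}
    (h : ∀ n, u (a + n) = v (b + n)) (hc : (a : ℝ) + b ≤ c) :
    shiftDistLe u v c := by
  obtain ⟨w1, hw1⟩ := shift_walk u a
  obtain ⟨w2, hw2⟩ := shift_walk v b
  have he : (fun n => u (a + n)) = (fun n => v (b + n)) := funext h
  refine ⟨(w1.copy rfl he).append w2.reverse, ?_⟩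
  rw [Walk.length_append, Walk.length_copy, Walk.length_reverse]
  have h1 : (w1.length : ℝ) ≤ (a : ℝ) := by exact_mod_cast hw1
  have h2 : (w2.length : ℝ) ≤ (b : ℝ) := by exact_mod_cast hw2
  push_cast
  linarith

/-- Finite set of group elements of word length at most n. -/
lemma exists_word_finset (S : Finset G) (n : ℕ) :
    ∃ W : Finset G, ∀ g : G, ∀ l : List G, (∀ s ∈ l, s ∈ (S : Set G)) → l.prod = g →
      l.length ≤ n → g ∈ W := by
  classical
  induction n with
  | zero =>
    refine ⟨{1}, fun g l hl hp hn => ?_⟩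
    have : l = [] := List.length_eq_zero_iff.mp (by omega)
    subst this; simp at hp; simp [← hp]
  | succ n ih =>
    obtain ⟨W, hW⟩ := ih
    refine ⟨W ∪ S.biUnion (fun s => W.image (fun g => s * g)), fun g l hl hp hn => ?_⟩
    match l with
    | [] =>
      simp at hp
      exact Finset.mem_union_left _ (hW g [] (by simp) (by simp [hp]) (by simp))
    | s :: t =>
      have hs : s ∈ S := hl s (List.mem_cons_self)
      have ht : t.prod ∈ W := hW t.prod t (fun x hx => hl x (List.mem_cons_of_mem _ hx)) rfl
        (by simp at hn; omega)
      refine Finset.mem_union_right _ (Finset.mem_biUnion.mpr ⟨s, hs, ?_⟩)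
      refine Finset.mem_image.mpr ⟨t.prod, ht, ?_⟩
      rw [← hp, List.prod_cons]

end BAaux

namespace BAaux
open BA SimpleGraph

variable {G : Type*} [Group G]

/-- Quantitative fellow-traveling. -/
lemma fellow_travel {S : Set G} (hconn : (cayley S).Connected) {delta : ℝ} (hd : 0 < delta)
    (hthin : DeltaThin (cayley S) delta)
    {g a : ℕ → G} (hg : GeoRay (cayley S) g) (hg0 : g 0 = 1)
    (ha : GeoRay (cayley S) a) {rn : ℕ} (ha0 : (cayley S).dist 1 (a 0) ≤ rn)
    (hAsy : Asymp (cayley S) a g) {t : ℕ} (ht : rn + 2 * ⌊delta⌋₊ + 1 ≤ t) :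
    ∃ m, (cayley S).dist (a m) (g t) ≤ 2 * ⌊delta⌋₊ ∧ m ≤ t + 2 * ⌊delta⌋₊ + rn ∧
      t ≤ m + 2 * ⌊delta⌋₊ + rn := by
  classical
  set dd := ⌊delta⌋₊ with hdd
  have hdd1 : delta < (dd : ℝ) + 1 := Nat.lt_floor_add_one delta
  have hglev : ∀ k, (cayley S).dist 1 (g k) = k := by
    intro k
    have h := hg.2 0 k
    rw [hg0] at h
    simpa [Nat.dist_zero_left] using h
  have had : ∀ m n : ℕ, m ≤ n → (cayley S).dist (a m) (a n) = n - m := by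
    intro m n h
    rw [ha.2 m n, Nat.dist_eq_sub_of_le h]
  have halev_le : ∀ n, (cayley S).dist 1 (a n) ≤ n + rn := by
    intro n
    have h1 := dist_tri hconn 1 (a 0) (a n)
    rw [had 0 n (Nat.zero_le n)] at h1
    omega
  have halev_ge : ∀ n, n ≤ (cayley S).dist 1 (a n) + rn := by
    intro n
    have h1 : (cayley S).dist (a 0) (a n) = n := by rw [had 0 n (Nat.zero_le n)]; omega
    have h2 := dist_tri hconn (a 0) 1 (a n)
    rw [h1, SimpleGraph.dist_comm (u := a 0) (v := 1)] at h2
    omega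
  obtain ⟨K, h1, -⟩ := hAsy
  set N := t + rn + K + 2 * dd + 2 with hN
  obtain ⟨T, wN, hwN⟩ := h1 N
  have hdNK : (cayley S).dist (a N) (g T) ≤ K := le_trans (dist_le wN) hwN
  have hTt : t + 2 * dd + 2 ≤ T := by
    have e1 := halev_ge N
    have e2 := dist_tri hconn 1 (g T) (a N)
    rw [hglev T] at e2
    have e3 : (cayley S).dist (g T) (a N) ≤ K := by
      rw [SimpleGraph.dist_comm]; exact hdNK
    omega
  obtain ⟨p1, hp1, hp10, hp1e⟩ := exists_geoSeg hconn (1 : G) (a 0)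
  obtain ⟨q1, hq1, hq10, hq1e⟩ := exists_geoSeg hconn (a 0) (g T)
  have hgseg : GeoSeg (cayley S) g T := ⟨fun i _ => hg.1 i, fun i _ j _ => hg.2 i j⟩
  have htri1 := hthin ((cayley S).dist 1 (a 0)) ((cayley S).dist (a 0) (g T)) T p1 q1 g
    hp1 hq1 hgseg (by rw [hp1e, hq10]) (by rw [hp10, hg0]) (by rw [hq1e]) t (by omega)
  obtain ⟨j, hj⟩ := htri1
  rcases hj with ⟨hja, hjd⟩ | ⟨hjb, hjd⟩
  · exfalso
    have hlevpj : (cayley S).dist 1 (p1 j) = j := by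
      have h := hp1.2 0 (Nat.zero_le _) j hja
      rw [hp10] at h
      simpa [Nat.dist_zero_left] using h
    have e1 := dist_tri hconn 1 (p1 j) (g t)
    rw [hglev t, hlevpj] at e1
    have e3 : (2 * dd + 1 : ℝ) ≤ (((cayley S).dist (p1 j) (g t) : ℕ) : ℝ) := by
      have h : 2 * dd + 1 ≤ (cayley S).dist (p1 j) (g t) := by
        have := ha0
        omega
      exact_mod_cast h
    rw [SimpleGraph.dist_comm (u := g t) (v := p1 j)] at hjd
    have h5 := le_trans e3 hjd
    have hd0 : (0:ℝ) ≤ (dd : ℝ) := by positivity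
    linarith
  · have hznat : (cayley S).dist (g t) (q1 j) ≤ dd := Nat.le_floor hjd
    obtain ⟨q2, hq2, hq20, hq2e⟩ := exists_geoSeg hconn (a N) (g T)
    have haseg : GeoSeg (cayley S) a N := ⟨fun i _ => ha.1 i, fun i _ j _ => ha.2 i j⟩
    have htri2 := hthin N ((cayley S).dist (a N) (g T)) ((cayley S).dist (a 0) (g T)) a q2 q1
      haseg hq2 hq1 (by rw [hq20]) (by rw [hq10]) (by rw [hq2e, hq1e]) j hjb
    obtain ⟨j2, hj2⟩ := htri2
    rcases hj2 with ⟨hj2a, hj2d⟩ | ⟨hj2b, hj2d⟩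
    · refine ⟨j2, ?_, ?_, ?_⟩
      · have hnat : (cayley S).dist (q1 j) (a j2) ≤ dd := Nat.le_floor hj2d
        have h6 := dist_tri hconn (g t) (q1 j) (a j2)
        have h7 : (cayley S).dist (g t) (a j2) ≤ 2 * dd := by omega
        rw [SimpleGraph.dist_comm] at h7
        exact h7
      · have e2 := dist_tri hconn 1 (g t) (a j2)
        rw [hglev t] at e2
        have e3 := dist_tri hconn (g t) (q1 j) (a j2)
        have e4 : (cayley S).dist (q1 j) (a j2) ≤ dd := Nat.le_floor hj2d
        have e5 := halev_ge j2
        omega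
      · have e1 := dist_tri hconn 1 (a j2) (g t)
        rw [hglev t] at e1
        have e2 := dist_tri hconn (a j2) (q1 j) (g t)
        have e3 : (cayley S).dist (a j2) (q1 j) ≤ dd := by
          rw [SimpleGraph.dist_comm]; exact Nat.le_floor hj2d
        rw [SimpleGraph.dist_comm (u := q1 j) (v := g t)] at e2
        have e4 := halev_le j2
        omega
    · exfalso
      have hq2lev : (cayley S).dist (a N) (q2 j2) = j2 := by
        have h := hq2.2 0 (Nat.zero_le _) j2 hj2b
        rw [hq20] at h
        simpa [Nat.dist_zero_left] using h
      have e1 := halev_ge N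
      have e2 := dist_tri hconn 1 (q2 j2) (a N)
      rw [SimpleGraph.dist_comm (u := q2 j2) (v := a N), hq2lev] at e2
      have e3 := dist_tri hconn 1 (q1 j) (q2 j2)
      have e4 : (cayley S).dist 1 (q1 j) ≤ t + dd := by
        have h := dist_tri hconn 1 (g t) (q1 j)
        rw [hglev t] at h
        omega
      have e5 : (cayley S).dist (q1 j) (q2 j2) ≤ dd := Nat.le_floor hj2d
      omega

end BAaux

namespace BAaux
open BA SimpleGraph

variable {G : Type*} [Group G] [LinearOrder G]

/-- One-sided exchange: if two lexicographically minimal geodesic rays towards the same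
boundary class pass through two common points (with matched parameter gaps) then at the
first divergence inside the common window, the `R'`-ray has the strictly smaller type. -/
lemma mix_aux {S : Set G} (hconn : (cayley S).Connected) {E : ℕ → G}
    {R R' : ℕ → G} (hR : GeoRay (cayley S) R) (hR' : GeoRay (cayley S) R')
    (hAR' : Asymp (cayley S) R' E)
    (minR' : ∀ W, GeoRay (cayley S) W → W 0 = R' 0 → Asymp (cayley S) W E →
      lexLe (typ R') (typ W))
    {m m' l j0 : ℕ} (h1 : R m = R' m') (h2 : R (m + l) = R' (m' + l))
    (hj0 : j0 + 1 ≤ l) (hpre : ∀ i ≤ j0, R (m + i) = R' (m' + i))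
    (hne : R (m + (j0 + 1)) ≠ R' (m' + (j0 + 1))) :
    typ R' (m' + j0) < typ R (m + j0) := by
  classical
  have dR : ∀ a b : ℕ, a ≤ b → (cayley S).dist (R a) (R b) = b - a := by
    intro a b h; rw [hR.2, Nat.dist_eq_sub_of_le h]
  have dR' : ∀ a b : ℕ, a ≤ b → (cayley S).dist (R' a) (R' b) = b - a := by
    intro a b h; rw [hR'.2, Nat.dist_eq_sub_of_le h]
  have key1 : ∀ i ≤ m', ∀ jj ≤ l, (cayley S).dist (R' i) (R (m + jj)) = (m' - i) + jj := by
    intro i hi jj hjj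
    have hub : (cayley S).dist (R' i) (R (m + jj)) ≤ (m' - i) + jj := by
      have t1 := dist_tri hconn (R' i) (R' m') (R (m + jj))
      have t2 : (cayley S).dist (R' m') (R (m + jj)) = jj := by
        rw [← h1, dR m (m + jj) (by omega)]; omega
      rw [dR' i m' hi] at t1; omega
    have hlb : m' + l - i ≤ (cayley S).dist (R' i) (R (m + jj)) + (l - jj) := by
      have t1 := dist_tri hconn (R' i) (R (m + jj)) (R' (m' + l))
      have t2 : (cayley S).dist (R (m + jj)) (R' (m' + l)) = l - jj := by
        rw [← h2, dR (m + jj) (m + l) (by omega)]; omega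
      rw [dR' i (m' + l) (by omega)] at t1; omega
    omega
  have key2 : ∀ jj ≤ l, ∀ k : ℕ,
      (cayley S).dist (R (m + jj)) (R' (m' + l + k)) = (l - jj) + k := by
    intro jj hjj k
    have hub : (cayley S).dist (R (m + jj)) (R' (m' + l + k)) ≤ (l - jj) + k := by
      have t1 := dist_tri hconn (R (m + jj)) (R (m + l)) (R' (m' + l + k))
      have t2 : (cayley S).dist (R (m + l)) (R' (m' + l + k)) = k := by
        rw [h2, dR' (m' + l) (m' + l + k) (by omega)]; omega
      rw [dR (m + jj) (m + l) (by omega)] at t1; omega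
    have hlb : l + k ≤ jj + (cayley S).dist (R (m + jj)) (R' (m' + l + k)) := by
      have t1 := dist_tri hconn (R' m') (R (m + jj)) (R' (m' + l + k))
      have t2 : (cayley S).dist (R' m') (R (m + jj)) = jj := by
        rw [← h1, dR m (m + jj) (by omega)]; omega
      rw [dR' m' (m' + l + k) (by omega)] at t1; omega
    omega
  set Mw : ℕ → G := fun n => if m' ≤ n ∧ n ≤ m' + l then R (m + (n - m')) else R' n with hMw
  have vLow : ∀ n ≤ m', Mw n = R' n := by
    intro n hn
    by_cases h : n = m'
    · subst h
      simp only [hMw]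
      rw [if_pos ⟨le_refl _, by omega⟩]
      simpa using h1
    · simp only [hMw]
      rw [if_neg (by omega)]
  have vMid : ∀ jj ≤ l, Mw (m' + jj) = R (m + jj) := by
    intro jj hjj
    simp only [hMw]
    rw [if_pos ⟨by omega, by omega⟩]
    congr 1
    omega
  have vHigh : ∀ n, m' + l ≤ n → Mw n = R' n := by
    intro n hn
    by_cases h : n = m' + l
    · subst h
      simp only [hMw]
      rw [if_pos ⟨by omega, le_refl _⟩]
      have : m' + l - m' = l := by omega
      rw [this, h2]
    · simp only [hMw]
      rw [if_neg (by omega)]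
  have geoMw : GeoRay (cayley S) Mw := by
    constructor
    · intro n
      rcases Nat.lt_or_ge n m' with hc | hc
      · rcases Nat.lt_or_ge (n + 1) m' with hc2 | hc2
        · rw [vLow n (by omega), vLow (n+1) (by omega)]
          exact hR'.1 n
        · have hn1 : n + 1 = m' := by omega
          rw [vLow n (by omega), vLow (n+1) (by omega)]
          exact hR'.1 n
      · rcases Nat.lt_or_ge n (m' + l) with hc2 | hc2
        · have e1 : Mw n = R (m + (n - m')) := by
            have := vMid (n - m') (by omega)
            rw [show m' + (n - m') = n by omega] at this
            exact this
          have e2 : Mw (n + 1) = R (m + (n + 1 - m')) := by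
            have := vMid (n + 1 - m') (by omega)
            rw [show m' + (n + 1 - m') = n + 1 by omega] at this
            exact this
          rw [e1, e2, show m + (n + 1 - m') = (m + (n - m')) + 1 by omega]
          exact hR.1 _
        · rw [vHigh n (by omega), vHigh (n+1) (by omega)]
          exact hR'.1 n
    · have mono : ∀ a b : ℕ, a ≤ b → (cayley S).dist (Mw a) (Mw b) = b - a := by
        intro a b hab
        rcases Nat.lt_or_ge a m' with ha | ha
        · rcases Nat.lt_or_ge b m' with hb | hb
          · rw [vLow a (by omega), vLow b (by omega), dR' a b hab]
          · rcases le_or_gt b (m' + l) with hb2 | hb2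
            · have eb : Mw b = R (m + (b - m')) := by
                have := vMid (b - m') (by omega)
                rw [show m' + (b - m') = b by omega] at this
                exact this
              rw [vLow a (by omega), eb, key1 a (by omega) (b - m') (by omega)]
              omega
            · rw [vLow a (by omega), vHigh b (by omega), dR' a b hab]
        · rcases le_or_gt b (m' + l) with hb2 | hb2
          · rcases le_or_gt a (m' + l) with ha2 | ha2
            · have ea : Mw a = R (m + (a - m')) := by
                have := vMid (a - m') (by omega)
                rw [show m' + (a - m') = a by omega] at this
                exact this
              have eb : Mw b = R (m + (b - m')) := by
                have := vMid (b - m') (by omega)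
                rw [show m' + (b - m') = b by omega] at this
                exact this
              rw [ea, eb, dR (m + (a - m')) (m + (b - m')) (by omega)]
              omega
            · omega
          · rcases le_or_gt a (m' + l) with ha2 | ha2
            · have ea : Mw a = R (m + (a - m')) := by
                have := vMid (a - m') (by omega)
                rw [show m' + (a - m') = a by omega] at this
                exact this
              have eb : Mw b = R' b := vHigh b (by omega)
              have := key2 (a - m') (by omega) (b - (m' + l))
              rw [show m' + l + (b - (m' + l)) = b by omega] at this
              rw [ea, eb, this]
              omega
            · rw [vHigh a (by omega), vHigh b (by omega), dR' a b hab]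
      intro a b
      rcases le_total a b with h | h
      · rw [mono a b h, Nat.dist_eq_sub_of_le h]
      · rw [SimpleGraph.dist_comm, mono b a h, Nat.dist_comm, Nat.dist_eq_sub_of_le h]
  have asymMw : Asymp (cayley S) Mw E := by
    refine asymp_trans ?_ hAR'
    have hclose : ∀ n, (cayley S).dist (Mw n) (R' n) ≤ 2 * l := by
      intro n
      rcases Nat.lt_or_ge n m' with hc | hc
      · rw [vLow n (by omega), SimpleGraph.dist_self]
        omega
      · rcases le_or_gt n (m' + l) with hc2 | hc2
        · have en : Mw n = R (m + (n - m')) := by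
            have := vMid (n - m') (by omega)
            rw [show m' + (n - m') = n by omega] at this
            exact this
          have t1 := dist_tri hconn (Mw n) (R' m') (R' n)
          have t2 : (cayley S).dist (Mw n) (R' m') ≤ l := by
            rw [en, SimpleGraph.dist_comm, key1 m' (le_refl _) (n - m') (by omega)]
            omega
          have t3 : (cayley S).dist (R' m') (R' n) ≤ l := by
            rw [dR' m' n (by omega)]
            omega
          omega
        · rw [vHigh n (by omega), SimpleGraph.dist_self]
          omega
    refine ⟨2 * l, fun n => ?_, fun n => ?_⟩
    · obtain ⟨w, hw⟩ := ((hconn (Mw n) (R' n))).exists_walk_length_eq_dist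
      exact ⟨n, w, by rw [hw]; exact hclose n⟩
    · obtain ⟨w, hw⟩ := ((hconn (Mw n) (R' n))).exists_walk_length_eq_dist
      exact ⟨n, w, by rw [hw]; exact hclose n⟩
  have hlex : lexLe (typ R') (typ Mw) :=
    minR' Mw geoMw (by rw [vLow 0 (Nat.zero_le _)]) asymMw
  have tpre : ∀ n < m' + j0, typ R' n = typ Mw n := by
    intro n hn
    rcases Nat.lt_or_ge n m' with hc | hc
    · simp only [typ]
      rw [vLow n (by omega), vLow (n+1) (by omega)]
    · have e1 : Mw n = R (m + (n - m')) := by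
        have := vMid (n - m') (by omega)
        rw [show m' + (n - m') = n by omega] at this
        exact this
      have e2 : Mw (n + 1) = R (m + (n + 1 - m')) := by
        have := vMid (n + 1 - m') (by omega)
        rw [show m' + (n + 1 - m') = n + 1 by omega] at this
        exact this
      simp only [typ]
      rw [e1, e2, hpre (n - m') (by omega), hpre (n + 1 - m') (by omega),
        show m' + (n - m') = n by omega, show m' + (n + 1 - m') = n + 1 by omega]
  have tne : typ R' (m' + j0) ≠ typ Mw (m' + j0) := by
    have e1 : Mw (m' + j0) = R (m + j0) := vMid j0 (by omega)
    have e2 : Mw (m' + j0 + 1) = R (m + j0 + 1) := by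
      have := vMid (j0 + 1) (by omega)
      rw [show m' + (j0 + 1) = m' + j0 + 1 by omega,
        show m + (j0 + 1) = m + j0 + 1 by omega] at this
      exact this
    simp only [typ]
    rw [e1, e2]
    intro hcontra
    have hbase : R' (m' + j0) = R (m + j0) := (hpre j0 (le_refl _)).symm
    rw [hbase] at hcontra
    have hnext : R' (m' + j0 + 1) = R (m + j0 + 1) := mul_left_cancel hcontra
    exact hne hnext.symm
  have hlt := lexLe_lt_of_ne hlex tpre tne
  have hfin : typ Mw (m' + j0) = typ R (m + j0) := by
    have e1 : Mw (m' + j0) = R (m + j0) := vMid j0 (by omega)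
    have e2 : Mw (m' + j0 + 1) = R (m + j0 + 1) := by
      have := vMid (j0 + 1) (by omega)
      rw [show m' + (j0 + 1) = m' + j0 + 1 by omega,
        show m + (j0 + 1) = m + j0 + 1 by omega] at this
      exact this
    simp only [typ]
    rw [e1, e2]
  rw [hfin] at hlt
  exact hlt

/-- The mixing lemma: two lex-minimal rays towards the same boundary class sharing two
common points with matched gaps agree along the whole common window. -/
lemma mixing {S : Set G} (hconn : (cayley S).Connected) {E : ℕ → G}
    {R R' : ℕ → G} (hR : GeoRay (cayley S) R) (hR' : GeoRay (cayley S) R')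
    (hAR : Asymp (cayley S) R E) (hAR' : Asymp (cayley S) R' E)
    (minR : ∀ W, GeoRay (cayley S) W → W 0 = R 0 → Asymp (cayley S) W E →
      lexLe (typ R) (typ W))
    (minR' : ∀ W, GeoRay (cayley S) W → W 0 = R' 0 → Asymp (cayley S) W E →
      lexLe (typ R') (typ W))
    {m m' l : ℕ} (h1 : R m = R' m') (h2 : R (m + l) = R' (m' + l)) :
    ∀ j ≤ l, R (m + j) = R' (m' + j) := by
  classical
  by_contra hcon
  push_neg at hcon
  have hex : ∃ j, j ≤ l ∧ R (m + j) ≠ R' (m' + j) := hcon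
  obtain ⟨hj1l, hj1ne⟩ := Nat.find_spec hex
  have hj1pos : Nat.find hex ≠ 0 := by
    intro h0
    rw [h0] at hj1ne
    simp only [Nat.add_zero] at hj1ne
    exact hj1ne h1
  obtain ⟨j0, hj0⟩ : ∃ j0, Nat.find hex = j0 + 1 := ⟨Nat.find hex - 1, by omega⟩
  have hpre : ∀ i ≤ j0, R (m + i) = R' (m' + i) := by
    intro i hi
    by_contra hne'
    have := Nat.find_min hex (m := i) (by omega)
    exact this ⟨by omega, hne'⟩
  have hne : R (m + (j0 + 1)) ≠ R' (m' + (j0 + 1)) := by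
    rw [← hj0]; exact hj1ne
  have hj1l' : j0 + 1 ≤ l := by omega
  have hA := mix_aux hconn hR hR' hAR' minR' h1 h2 hj1l' hpre hne
  have hB := mix_aux hconn hR' hR hAR minR h1.symm h2.symm hj1l' 
    (fun i hi => (hpre i hi).symm) (fun hcontra => hne hcontra.symm)
  exact absurd hA (not_lt_of_gt hB)

end BAaux
open BA in
/-- Key lemma. Fix a boundary point `η` (a ray `Γη`), `r > 0`,
and the assignment `ζ ↦ σ_ζ` of lexicographically minimal types. The types of
the boundary points in the Schreier-metric ball `B_ρ(η, r)` (i.e. points `ζ`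
with `g ζ = η` for some `g` of word length `≤ r`) can be partitioned into at
most `M²` sets, each of `ρ_s`-diameter at most `8(r + 3δ + 2)`; in particular
they meet at most `M²` tail equivalence classes, where `M` bounds the size of
`5δ`-balls in the Cayley graph. -/
theorem stmt10 {G : Type*} [Group G] [LinearOrder G] (S : Finset G)
    (hsym : ∀ s ∈ S, s⁻¹ ∈ S) (hgen : Subgroup.closure (S : Set G) = ⊤)
    (δ : ℝ) (hδ : 0 < δ) (hhyp : DeltaThin (cayley (S : Set G)) δ)
    (M : ℕ)
    (hM : ∀ g : G, {h : G | ((cayley (S : Set G)).dist g h : ℝ) ≤ 5 * δ}.encard ≤ (M : ℕ∞))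
    (r : ℝ) (hr : 0 < r)
    (Γη : ℕ → G) (hΓη : GeoRay (cayley (S : Set G)) Γη)
    (σ : (ℕ → G) → (ℕ → G))
    (hσ : ∀ Z : ℕ → G, GeoRay (cayley (S : Set G)) Z →
      ∃ Δ : ℕ → G, GeoRay (cayley (S : Set G)) Δ ∧ Δ 0 = 1 ∧
        Asymp (cayley (S : Set G)) Δ Z ∧ typ Δ = σ Z ∧
        ∀ Δ' : ℕ → G, GeoRay (cayley (S : Set G)) Δ' → Δ' 0 = 1 →
          Asymp (cayley (S : Set G)) Δ' Z → lexLe (σ Z) (typ Δ')) :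
    ∃ P : Fin (M ^ 2) → Set (ℕ → G),
      (∀ Z : ℕ → G, GeoRay (cayley (S : Set G)) Z →
        (∃ g : G, wordLenLe (S : Set G) g r ∧
          Asymp (cayley (S : Set G)) (fun n => g * Z n) Γη) →
        ∃ i, σ Z ∈ P i) ∧
      (∀ i, ∀ u ∈ P i, ∀ v ∈ P i, shiftDistLe u v (8 * (r + 3 * δ + 2))) ∧
      (∃ reps : Fin (M ^ 2) → (ℕ → G),
        ∀ Z : ℕ → G, GeoRay (cayley (S : Set G)) Z →
          (∃ g : G, wordLenLe (S : Set G) g r ∧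
            Asymp (cayley (S : Set G)) (fun n => g * Z n) Γη) →
          ∃ i, tailEquiv (σ Z) (reps i)) := by
  classical
  have hconn : (cayley (S : Set G)).Connected := BAaux.cayley_connected _ hgen
  set dd := ⌊δ⌋₊ with hdd
  set rn := ⌊r⌋₊ with hrn
  -- minimal rays towards each translated boundary point
  have hZg : ∀ g : G, GeoRay (cayley (S : Set G)) (fun n => g⁻¹ * Γη n) :=
    fun g => BAaux.georay_mul _ g⁻¹ hΓη
  choose Δf hΔgeo hΔ0 hΔasy hΔtyp hΔmin using fun g : G => hσ _ (hZg g)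
  set Rf : G → ℕ → G := fun g n => g * Δf g n with hRfdef
  have hRgeo : ∀ g, GeoRay (cayley (S : Set G)) (Rf g) :=
    fun g => BAaux.georay_mul _ g (hΔgeo g)
  have hR0 : ∀ g, Rf g 0 = g := by
    intro g
    show g * Δf g 0 = g
    rw [hΔ0 g, mul_one]
  have hRA : ∀ g, Asymp (cayley (S : Set G)) (Rf g) Γη := by
    intro g
    have h := BAaux.asymp_mul (S : Set G) g (hΔasy g)
    have he : (fun n => g * (g⁻¹ * Γη n)) = Γη := by
      funext n; rw [mul_inv_cancel_left]
    rwa [he] at h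
  have hRtyp : ∀ g, typ (Rf g) = σ (fun n => g⁻¹ * Γη n) := by
    intro g
    have : typ (Rf g) = typ (Δf g) := BAaux.typ_mul g (Δf g)
    rw [this, hΔtyp g]
  have hRmin : ∀ g, ∀ W, GeoRay (cayley (S : Set G)) W → W 0 = Rf g 0 →
      Asymp (cayley (S : Set G)) W Γη → lexLe (typ (Rf g)) (typ W) := by
    intro g W hW hW0 hWA
    rw [hR0 g] at hW0
    have h1 : GeoRay (cayley (S : Set G)) (fun n => g⁻¹ * W n) := BAaux.georay_mul _ g⁻¹ hW
    have h2 : (fun n => g⁻¹ * W n) 0 = 1 := by simp [hW0]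
    have h3 : Asymp (cayley (S : Set G)) (fun n => g⁻¹ * W n) (fun n => g⁻¹ * Γη n) :=
      BAaux.asymp_mul _ g⁻¹ hWA
    have h4 := hΔmin g _ h1 h2 h3
    rw [BAaux.typ_mul] at h4
    rw [hRtyp g]
    exact h4
  -- eligible σ-values come from the family
  have hkey : ∀ Z, GeoRay (cayley (S : Set G)) Z → ∀ g,
      Asymp (cayley (S : Set G)) (fun n => g * Z n) Γη → σ Z = typ (Rf g) := by
    intro Z hZ g hgZ
    obtain ⟨ΔZ, hZ1, hZ2, hZ3, hZ4, hZ5⟩ := hσ Z hZ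
    have hZas : Asymp (cayley (S : Set G)) Z (fun n => g⁻¹ * Γη n) := by
      have h := BAaux.asymp_mul (S : Set G) g⁻¹ hgZ
      have he : (fun n => g⁻¹ * (g * Z n)) = Z := by
        funext n; rw [inv_mul_cancel_left]
      rwa [he] at h
    have a1 : lexLe (σ (fun n => g⁻¹ * Γη n)) (σ Z) := by
      have hc := hΔmin g ΔZ hZ1 hZ2 (asymp_trans hZ3 hZas)
      rwa [hZ4] at hc
    have a2 : lexLe (σ Z) (σ (fun n => g⁻¹ * Γη n)) := by
      have hc := hZ5 (Δf g) (hΔgeo g) (hΔ0 g) (asymp_trans (hΔasy g) (asymp_symm hZas))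
      rwa [hΔtyp g] at hc
    rw [hRtyp g]
    exact (BAaux.lexLe_antisymm a1 a2).symm
  -- reference ray γ := Δf 1
  have hγgeo : GeoRay (cayley (S : Set G)) (Δf 1) := hΔgeo 1
  have hγ0 : Δf 1 0 = 1 := hΔ0 1
  have hγA : Asymp (cayley (S : Set G)) (Δf 1) Γη := by
    have h := hΔasy 1
    have he : (fun n => (1 : G)⁻¹ * Γη n) = Γη := by
      funext n; rw [inv_one, one_mul]
    rwa [he] at h
  have hRγ : ∀ g, Asymp (cayley (S : Set G)) (Rf g) (Δf 1) :=
    fun g => asymp_trans (hRA g) (asymp_symm hγA)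
  -- the finite set of witnesses
  obtain ⟨W0, hW0⟩ := BAaux.exists_word_finset S rn
  set WQ : Finset G := W0.filter (fun g => (cayley (S : Set G)).dist 1 g ≤ rn) with hWQ
  have hmemWQ : ∀ g, wordLenLe (S : Set G) g r → g ∈ WQ := by
    intro g hg
    obtain ⟨l, hl1, hl2, hl3⟩ := hg
    have hdist := BAaux.dist_one_of_word (S := (S : Set G)) ⟨l, hl1, hl2, hl3⟩
    refine Finset.mem_filter.mpr ⟨hW0 g l hl1 hl2 (Nat.le_floor hl3), Nat.le_floor hdist⟩
  have hdistWQ : ∀ g ∈ WQ, (cayley (S : Set G)).dist 1 g ≤ rn :=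
    fun g hg => (Finset.mem_filter.mp hg).2
  -- level estimates
  have hlev : ∀ g ∈ WQ, ∀ k, (cayley (S : Set G)).dist 1 (Rf g k) ≤ k + rn ∧
      k ≤ (cayley (S : Set G)).dist 1 (Rf g k) + rn := by
    intro g hg k
    have h0 : (cayley (S : Set G)).dist (Rf g 0) (Rf g k) = k := by
      rw [(hRgeo g).2, Nat.dist_zero_left]
    have hg0 : (cayley (S : Set G)).dist 1 (Rf g 0) ≤ rn := by
      rw [hR0]; exact hdistWQ g hg
    have t1 := BAaux.dist_tri hconn 1 (Rf g 0) (Rf g k)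
    have t2 := BAaux.dist_tri hconn (Rf g 0) 1 (Rf g k)
    have hcomm : (cayley (S : Set G)).dist (Rf g 0) 1 = (cayley (S : Set G)).dist 1 (Rf g 0) :=
      SimpleGraph.dist_comm
    omega
  -- eventual-coincidence relation and boundedness of common points
  have hEub : ∀ g ∈ WQ, ∀ h ∈ WQ,
      (∀ B, ∃ p q, Rf g p = Rf h q ∧ B < p) →
      ∃ a b : ℕ, ∀ j, Rf g (a + j) = Rf h (b + j) := by
    intro g hg h hh hub
    obtain ⟨p0, q0, hc0, -⟩ := hub 0
    refine ⟨p0, q0, fun j => ?_⟩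
    obtain ⟨p, q, hcp, hp⟩ := hub (p0 + j + q0 + 2 * rn + 1)
    have lp := hlev g hg p
    have lq := hlev h hh q
    have hdeq : (cayley (S : Set G)).dist 1 (Rf g p) = (cayley (S : Set G)).dist 1 (Rf h q) := by
      rw [hcp]
    have hq0q : q0 ≤ q := by omega
    have hp0p : p0 ≤ p := by omega
    have d1 : (cayley (S : Set G)).dist (Rf g p0) (Rf g p) = p - p0 := by
      rw [(hRgeo g).2, Nat.dist_eq_sub_of_le hp0p]
    have d2 : (cayley (S : Set G)).dist (Rf h q0) (Rf h q) = q - q0 := by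
      rw [(hRgeo h).2, Nat.dist_eq_sub_of_le hq0q]
    rw [hc0, hcp] at d1
    have dL : p - p0 = q - q0 := by omega
    have h2 : Rf g (p0 + (p - p0)) = Rf h (q0 + (p - p0)) := by
      rw [show p0 + (p - p0) = p by omega, show q0 + (p - p0) = q by omega]
      exact hcp
    have hL := BAaux.mixing hconn (hRgeo g) (hRgeo h) (hRA g) (hRA h)
      (hRmin g) (hRmin h) hc0 h2
    exact hL j (by omega)
  have hbnd : ∀ g ∈ WQ, ∀ h ∈ WQ,
      ¬ (∃ a b : ℕ, ∀ j, Rf g (a + j) = Rf h (b + j)) →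
      ∃ B, ∀ p q, Rf g p = Rf h q → p ≤ B := by
    intro g hg h hh hne
    by_contra hc
    push_neg at hc
    refine hne (hEub g hg h hh ?_)
    intro B
    obtain ⟨p, q, hpq, hp⟩ := hc B
    exact ⟨p, q, hpq, hp⟩
  -- global bound over the finite family
  set Bfun : G × G → ℕ := fun gh =>
    if hb : (∃ B, ∀ p q, Rf gh.1 p = Rf gh.2 q → p ≤ B) then hb.choose else 0 with hBfun
  set Bsup := (WQ ×ˢ WQ).sup Bfun with hBsup
  set t0 : ℕ := rn + 2 * dd + 1 with ht0
  set tstar : ℕ := Bsup + t0 + t0 + 2 * dd + rn + 1 with htstar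
  -- fellow-travel checkpoints
  have hFT : ∀ g ∈ WQ, ∀ t, rn + 2 * dd + 1 ≤ t →
      ∃ m, (cayley (S : Set G)).dist (Rf g m) (Δf 1 t) ≤ 2 * dd ∧
        m ≤ t + 2 * dd + rn ∧ t ≤ m + 2 * dd + rn := by
    intro g hg t ht
    exact BAaux.fellow_travel hconn hδ hhyp hγgeo hγ0 (hRgeo g)
      (by rw [hR0 g]; exact hdistWQ g hg) (hRγ g) ht
  have htstar_ge : rn + 2 * dd + 1 ≤ tstar := by omega
  set mm : G → ℕ := fun g => if hg : g ∈ WQ then (hFT g hg t0 le_rfl).choose else 0 with hmm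
  set nn : G → ℕ := fun g => if hg : g ∈ WQ then (hFT g hg tstar htstar_ge).choose else 0 with hnn
  have hmm_spec : ∀ g (hg : g ∈ WQ),
      (cayley (S : Set G)).dist (Rf g (mm g)) (Δf 1 t0) ≤ 2 * dd ∧
        mm g ≤ t0 + 2 * dd + rn ∧ t0 ≤ mm g + 2 * dd + rn := by
    intro g hg
    have heq : mm g = (hFT g hg t0 le_rfl).choose := dif_pos hg
    rw [heq]
    exact (hFT g hg t0 le_rfl).choose_spec
  have hnn_spec : ∀ g (hg : g ∈ WQ),
      (cayley (S : Set G)).dist (Rf g (nn g)) (Δf 1 tstar) ≤ 2 * dd ∧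
        nn g ≤ tstar + 2 * dd + rn ∧ tstar ≤ nn g + 2 * dd + rn := by
    intro g hg
    have heq : nn g = (hFT g hg tstar htstar_ge).choose := dif_pos hg
    rw [heq]
    exact (hFT g hg tstar htstar_ge).choose_spec
  -- the merging theorem
  have merge : ∀ g, g ∈ WQ → ∀ h, h ∈ WQ → Rf g (nn g) = Rf h (nn h) →
      Rf g (mm g) = Rf h (mm h) → ∀ j, Rf g (mm g + j) = Rf h (mm h + j) := by
    intro g hg h hh hQ hP j
    have hEgh : ∃ a b : ℕ, ∀ j, Rf g (a + j) = Rf h (b + j) := by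
      by_cases hE' : ∃ a b : ℕ, ∀ j, Rf g (a + j) = Rf h (b + j)
      · exact hE'
      · exfalso
        have hb : ∃ B, ∀ p q, Rf g p = Rf h q → p ≤ B := hbnd g hg h hh hE'
        have hspec : ∀ p q, Rf g p = Rf h q → p ≤ Bfun (g, h) := by
          show ∀ p q, Rf g p = Rf h q → p ≤
            (if hb' : (∃ B, ∀ p q, Rf g p = Rf h q → p ≤ B) then hb'.choose else 0)
          rw [dif_pos hb]
          exact hb.choose_spec
        have h1 := hspec (nn g) (nn h) hQ
        have h2 : Bfun (g, h) ≤ Bsup :=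
          Finset.le_sup (Finset.mem_product.mpr ⟨hg, hh⟩)
        have h3 := (hnn_spec g hg).2.2
        omega
    obtain ⟨a, b, hab⟩ := hEgh
    set Np := mm g + mm h + j + a + b + 1 with hNp
    have hcom : Rf g (a + Np) = Rf h (b + Np) := hab Np
    have hmmle : mm g ≤ a + Np := by omega
    have hmmle' : mm h ≤ b + Np := by omega
    have d1 : (cayley (S : Set G)).dist (Rf g (mm g)) (Rf g (a + Np)) = (a + Np) - mm g := by
      rw [(hRgeo g).2, Nat.dist_eq_sub_of_le hmmle]
    have d2 : (cayley (S : Set G)).dist (Rf h (mm h)) (Rf h (b + Np)) = (b + Np) - mm h := by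
      rw [(hRgeo h).2, Nat.dist_eq_sub_of_le hmmle']
    rw [hP, hcom] at d1
    have dL : (a + Np) - mm g = (b + Np) - mm h := by omega
    have h2c : Rf g (mm g + ((a + Np) - mm g)) = Rf h (mm h + ((a + Np) - mm g)) := by
      rw [show mm g + ((a + Np) - mm g) = a + Np by omega,
        show mm h + ((a + Np) - mm g) = b + Np by omega]
      exact hcom
    have hL := BAaux.mixing hconn (hRgeo g) (hRgeo h) (hRA g) (hRA h)
      (hRmin g) (hRmin h) hP h2c
    exact hL j (by omega)
  -- fingerprint balls
  have hfin1 : ({x : G | ((cayley (S : Set G)).dist (Δf 1 tstar) x : ℝ) ≤ 5 * δ}).Finite :=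
    Set.finite_of_encard_le_coe (hM _)
  have hfin2 : ({x : G | ((cayley (S : Set G)).dist (Δf 1 t0) x : ℝ) ≤ 5 * δ}).Finite :=
    Set.finite_of_encard_le_coe (hM _)
  haveI ft1 : Fintype ({x : G | ((cayley (S : Set G)).dist (Δf 1 tstar) x : ℝ) ≤ 5 * δ}) :=
    hfin1.fintype
  haveI ft2 : Fintype ({x : G | ((cayley (S : Set G)).dist (Δf 1 t0) x : ℝ) ≤ 5 * δ}) :=
    hfin2.fintype
  have hcard1 : Fintype.card ({x : G | ((cayley (S : Set G)).dist (Δf 1 tstar) x : ℝ) ≤ 5 * δ}) ≤ M := by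
    have h1 := hM (Δf 1 tstar)
    rw [Set.encard_eq_coe_toFinset_card, Set.toFinset_card] at h1
    exact_mod_cast h1
  have hcard2 : Fintype.card ({x : G | ((cayley (S : Set G)).dist (Δf 1 t0) x : ℝ) ≤ 5 * δ}) ≤ M := by
    have h1 := hM (Δf 1 t0)
    rw [Set.encard_eq_coe_toFinset_card, Set.toFinset_card] at h1
    exact_mod_cast h1
  obtain ⟨emb1⟩ : Nonempty (({x : G | ((cayley (S : Set G)).dist (Δf 1 tstar) x : ℝ) ≤ 5 * δ}) ↪ Fin M) :=
    Function.Embedding.nonempty_iff_card_le.mpr (by rwa [Fintype.card_fin])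
  obtain ⟨emb2⟩ : Nonempty (({x : G | ((cayley (S : Set G)).dist (Δf 1 t0) x : ℝ) ≤ 5 * δ}) ↪ Fin M) :=
    Function.Embedding.nonempty_iff_card_le.mpr (by rwa [Fintype.card_fin])
  have hM2pos : 0 < M ^ 2 := by
    have h2 : (1 : ℕ∞) ≤ ({h : G | ((cayley (S : Set G)).dist 1 h : ℝ) ≤ 5 * δ}).encard := by
      rw [Set.one_le_encard_iff_nonempty]
      refine ⟨1, ?_⟩
      simp only [Set.mem_setOf_eq, SimpleGraph.dist_self, Nat.cast_zero]
      positivity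
    have h3 := le_trans h2 (hM 1)
    have h4 : 1 ≤ M := by exact_mod_cast h3
    positivity
  set ι : G × G → Fin (M ^ 2) := fun x =>
    if hx : ((cayley (S : Set G)).dist (Δf 1 tstar) x.1 : ℝ) ≤ 5 * δ ∧
        ((cayley (S : Set G)).dist (Δf 1 t0) x.2 : ℝ) ≤ 5 * δ then
      Fin.cast (pow_two M).symm (finProdFinEquiv (emb1 ⟨x.1, hx.1⟩, emb2 ⟨x.2, hx.2⟩))
    else ⟨0, hM2pos⟩ with hι
  have hmemQ : ∀ g, g ∈ WQ → ((cayley (S : Set G)).dist (Δf 1 tstar) (Rf g (nn g)) : ℝ) ≤ 5 * δ := by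
    intro g hg
    have h1 := (hnn_spec g hg).1
    have h2 : (cayley (S : Set G)).dist (Δf 1 tstar) (Rf g (nn g)) ≤ 2 * dd := by
      rw [SimpleGraph.dist_comm]; exact h1
    have h3 : ((cayley (S : Set G)).dist (Δf 1 tstar) (Rf g (nn g)) : ℝ) ≤ 2 * (dd : ℝ) := by
      exact_mod_cast h2
    have h4 : (dd : ℝ) ≤ δ := Nat.floor_le hδ.le
    linarith
  have hmemP : ∀ g, g ∈ WQ → ((cayley (S : Set G)).dist (Δf 1 t0) (Rf g (mm g)) : ℝ) ≤ 5 * δ := by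
    intro g hg
    have h1 := (hmm_spec g hg).1
    have h2 : (cayley (S : Set G)).dist (Δf 1 t0) (Rf g (mm g)) ≤ 2 * dd := by
      rw [SimpleGraph.dist_comm]; exact h1
    have h3 : ((cayley (S : Set G)).dist (Δf 1 t0) (Rf g (mm g)) : ℝ) ≤ 2 * (dd : ℝ) := by
      exact_mod_cast h2
    have h4 : (dd : ℝ) ≤ δ := Nat.floor_le hδ.le
    linarith
  have hιinj : ∀ g, g ∈ WQ → ∀ h, h ∈ WQ →
      ι (Rf g (nn g), Rf g (mm g)) = ι (Rf h (nn h), Rf h (mm h)) →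
      Rf g (nn g) = Rf h (nn h) ∧ Rf g (mm g) = Rf h (mm h) := by
    intro g hg h hh he
    have hx : ((cayley (S : Set G)).dist (Δf 1 tstar) (Rf g (nn g)) : ℝ) ≤ 5 * δ ∧
        ((cayley (S : Set G)).dist (Δf 1 t0) (Rf g (mm g)) : ℝ) ≤ 5 * δ :=
      ⟨hmemQ g hg, hmemP g hg⟩
    have hy : ((cayley (S : Set G)).dist (Δf 1 tstar) (Rf h (nn h)) : ℝ) ≤ 5 * δ ∧
        ((cayley (S : Set G)).dist (Δf 1 t0) (Rf h (mm h)) : ℝ) ≤ 5 * δ :=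
      ⟨hmemQ h hh, hmemP h hh⟩
    rw [hι] at he
    simp only [dif_pos hx, dif_pos hy] at he
    have hval := congrArg Fin.val he
    rw [Fin.coe_cast, Fin.coe_cast] at hval
    have he2 : finProdFinEquiv (emb1 ⟨Rf g (nn g), hx.1⟩, emb2 ⟨Rf g (mm g), hx.2⟩) =
        finProdFinEquiv (emb1 ⟨Rf h (nn h), hy.1⟩, emb2 ⟨Rf h (mm h), hy.2⟩) :=
      Fin.ext hval
    have he3 := finProdFinEquiv.injective he2
    have he4 : emb1 ⟨Rf g (nn g), hx.1⟩ = emb1 ⟨Rf h (nn h), hy.1⟩ := congrArg Prod.fst he3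
    have he5 : emb2 ⟨Rf g (mm g), hx.2⟩ = emb2 ⟨Rf h (mm h), hy.2⟩ := congrArg Prod.snd he3
    have he6 := emb1.injective he4
    have he7 := emb2.injective he5
    exact ⟨congrArg Subtype.val he6, congrArg Subtype.val he7⟩
  -- the partition
  set P : Fin (M ^ 2) → Set (ℕ → G) := fun i =>
    {u | ∃ g, g ∈ WQ ∧ ι (Rf g (nn g), Rf g (mm g)) = i ∧ u = typ (Rf g)} with hPdef
  have hsync : ∀ g, g ∈ WQ → ∀ h, h ∈ WQ →
      ι (Rf g (nn g), Rf g (mm g)) = ι (Rf h (nn h), Rf h (mm h)) →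
      ∀ n, typ (Rf g) (mm g + n) = typ (Rf h) (mm h + n) := by
    intro g hg h hh he n
    obtain ⟨hQ, hP2⟩ := hιinj g hg h hh he
    have hm := merge g hg h hh hQ hP2
    show (Rf g (mm g + n))⁻¹ * Rf g (mm g + n + 1) = (Rf h (mm h + n))⁻¹ * Rf h (mm h + n + 1)
    rw [hm n, show mm g + n + 1 = mm g + (n + 1) by omega, hm (n + 1),
      show mm h + (n + 1) = mm h + n + 1 by omega]
  have hmub : ∀ g, g ∈ WQ → mm g ≤ 2 * rn + 4 * dd + 1 := by
    intro g hg
    have := (hmm_spec g hg).2.1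
    omega
  have harith : ∀ g, g ∈ WQ → ∀ h, h ∈ WQ → ((mm g : ℝ)) + (mm h) ≤ 8 * (r + 3 * δ + 2) := by
    intro g hg h hh
    have h1 := hmub g hg
    have h2 := hmub h hh
    have h3 : (mm g : ℝ) ≤ 2 * rn + 4 * dd + 1 := by exact_mod_cast h1
    have h4 : (mm h : ℝ) ≤ 2 * rn + 4 * dd + 1 := by exact_mod_cast h2
    have h5 : (rn : ℝ) ≤ r := Nat.floor_le hr.le
    have h6 : (dd : ℝ) ≤ δ := Nat.floor_le hδ.le
    linarith
  refine ⟨P, ?_, ?_, ?_⟩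
  · -- coverage
    rintro Z hZ ⟨g, hgw, hgA⟩
    exact ⟨ι (Rf g (nn g), Rf g (mm g)), g, hmemWQ g hgw, rfl, hkey Z hZ g hgA⟩
  · -- diameter
    rintro i u ⟨g, hg, hgi, rfl⟩ v ⟨h, hh, hhi, rfl⟩
    refine BAaux.shiftDistLe_of_shift_eq (a := mm g) (b := mm h) ?_ ?_
    · exact fun n => hsync g hg h hh (by rw [hgi, hhi]) n
    · exact harith g hg h hh
  · -- representatives
    refine ⟨fun i => if hi : ∃ g, g ∈ WQ ∧ ι (Rf g (nn g), Rf g (mm g)) = i then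
      typ (Rf hi.choose) else (fun _ => 1), ?_⟩
    rintro Z hZ ⟨g, hgw, hgA⟩
    have hgQ := hmemWQ g hgw
    refine ⟨ι (Rf g (nn g), Rf g (mm g)), ?_⟩
    have hi : ∃ g', g' ∈ WQ ∧ ι (Rf g' (nn g'), Rf g' (mm g')) =
        ι (Rf g (nn g), Rf g (mm g)) := ⟨g, hgQ, rfl⟩
    simp only [dif_pos hi]
    obtain ⟨hg'Q, hg'i⟩ := hi.choose_spec
    rw [hkey Z hZ g hgA]
    exact ⟨mm g, mm hi.choose, fun n => hsync g hgQ hi.choose hg'Q hg'i.symm n⟩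
end

section
/- Let G be a hyperbolic group with finite symmetric generating set S, and for each boundary point η let σ_η ∈ S^ℕ be the ≤_lex-minimal type of a geodesic ray from the identity converging to η. Then for all η, ζ ∈ ∂G, ρ(η, ζ) ≤ ρ_s(σ_η, σ_ζ), where ρ is the Schreier graph metric on ∂G induced by the boundary action and ρ_s is the shift-graph metric on S^ℕ. -/
section Aux
open BA SimpleGraph

private lemma shift_iterate' {α : Type*} (x : ℕ → α) (a n : ℕ) :
    (shift^[a] x) n = x (n + a) := by
  induction a generalizing x n with
  | zero => rfl
  | succ a ih => rw [Function.iterate_succ_apply, ih]; simp [shift, Nat.add_comm,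
      Nat.add_assoc, Nat.add_left_comm]

private lemma walk_to_shifts' {α : Type*} {x y : ℕ → α} (w : (shiftGraph α).Walk x y) :
    ∃ a b, a + b ≤ w.length ∧ shift^[a] x = shift^[b] y := by
  induction w with
  | nil => exact ⟨0, 0, by simp, rfl⟩
  | @cons u v z h w ih =>
    obtain ⟨a, b, hab, heq⟩ := ih
    rw [shiftGraph, SimpleGraph.fromRel_adj] at h
    rcases h.2 with h' | h'
    · refine ⟨a + 1, b, by simp [Walk.length_cons]; omega, ?_⟩
      rw [Function.iterate_succ_apply, h', heq]
    · refine ⟨a, b + 1, by simp [Walk.length_cons]; omega, ?_⟩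
      calc shift^[a] u = shift (shift^[a] v) := by
              rw [← h', ← Function.iterate_succ_apply, Function.iterate_succ_apply']
        _ = shift^[b + 1] z := by rw [heq, Function.iterate_succ_apply']

private lemma cayley_adj_mul' {G : Type*} [Group G] {S : Set G} {x y : G} (g : G)
    (h : (cayley S).Adj x y) : (cayley S).Adj (g * x) (g * y) := by
  rw [cayley, SimpleGraph.fromRel_adj] at h ⊢
  constructor
  · simpa using h.1
  · have h1 : (g * x)⁻¹ * (g * y) = x⁻¹ * y := by group
    have h2 : (g * y)⁻¹ * (g * x) = y⁻¹ * x := by group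
    rw [h1, h2]; exact h.2

private lemma walk_along' {V : Type*} {Gr : SimpleGraph V} {x : ℕ → V}
    (hadj : ∀ n, Gr.Adj (x n) (x (n + 1))) (n d : ℕ) :
    ∃ w : Gr.Walk (x n) (x (n + d)), w.length = d := by
  induction d with
  | zero => exact ⟨Walk.nil, rfl⟩
  | succ d ih =>
    obtain ⟨w, hw⟩ := ih
    exact ⟨w.concat (hadj (n + d)), by simp [Walk.length_concat, hw]⟩

private lemma typ_prod' {G : Type*} [Group G] (x : ℕ → G) (k : ℕ) :
    ((List.range k).map (typ x)).prod = (x 0)⁻¹ * x k := by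
  induction k with
  | zero => simp
  | succ k ih => rw [List.range_succ]; simp [ih, typ, mul_assoc]

end Aux

open BA in
/-- `ρ(η, ζ) ≤ ρ_s(σ_η, σ_ζ)`. If the lexicographically minimal
rays `Δη ∈ CGR(e,η)`, `Δζ ∈ CGR(e,ζ)` have types at shift-graph distance at
most `M`, then some `g` of word length at most `M` maps `η` to `ζ`. -/
theorem stmt11 {G : Type*} [Group G] [LinearOrder G] (S : Finset G)
    (hsym : ∀ s ∈ S, s⁻¹ ∈ S) (hgen : Subgroup.closure (S : Set G) = ⊤)
    (δ : ℝ) (hδ : 0 < δ) (hhyp : DeltaThin (cayley (S : Set G)) δ)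
    (Δη Δζ : ℕ → G)
    (hΔη : GeoRay (cayley (S : Set G)) Δη) (h0η : Δη 0 = 1)
    (hminη : ∀ Δ' : ℕ → G, GeoRay (cayley (S : Set G)) Δ' → Δ' 0 = 1 →
      Asymp (cayley (S : Set G)) Δ' Δη → lexLe (typ Δη) (typ Δ'))
    (hΔζ : GeoRay (cayley (S : Set G)) Δζ) (h0ζ : Δζ 0 = 1)
    (hminζ : ∀ Δ' : ℕ → G, GeoRay (cayley (S : Set G)) Δ' → Δ' 0 = 1 →
      Asymp (cayley (S : Set G)) Δ' Δζ → lexLe (typ Δζ) (typ Δ'))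
    (M : ℝ) (hdist : shiftDistLe (typ Δη) (typ Δζ) M) :
    ∃ g : G, wordLenLe (S : Set G) g M ∧
      Asymp (cayley (S : Set G)) (fun n => g * Δη n) Δζ := by
  classical
  obtain ⟨w, hw⟩ := hdist
  obtain ⟨a, b, hab, heq⟩ := walk_to_shifts' w
  refine ⟨Δζ b * (Δη a)⁻¹, ?_, ?_⟩
  all_goals
    have htyp : ∀ n, typ Δη (n + a) = typ Δζ (n + b) := by
      intro n
      have := congrFun heq n
      rwa [shift_iterate', shift_iterate'] at this
  · -- word length
    have hmemη : ∀ n, typ Δη n ∈ (S : Set G) := by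
      intro n
      have h := hΔη.1 n
      rw [cayley, SimpleGraph.fromRel_adj] at h
      rcases h.2 with h' | h'
      · exact h'
      · have h2 := hsym _ h'
        have h3 : ((Δη (n + 1))⁻¹ * Δη n)⁻¹ = typ Δη n := by simp [typ]
        rw [h3] at h2
        exact h2
    have hmemζ : ∀ n, typ Δζ n ∈ (S : Set G) := by
      intro n
      have h := hΔζ.1 n
      rw [cayley, SimpleGraph.fromRel_adj] at h
      rcases h.2 with h' | h'
      · exact h'
      · have h2 := hsym _ h'
        have h3 : ((Δζ (n + 1))⁻¹ * Δζ n)⁻¹ = typ Δζ n := by simp [typ]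
        rw [h3] at h2
        exact h2
    refine ⟨(List.range b).map (typ Δζ) ++
      (((List.range a).map (typ Δη)).map (fun s => s⁻¹)).reverse, ?_, ?_, ?_⟩
    · intro s hs
      rcases List.mem_append.1 hs with hs | hs
      · obtain ⟨i, _, rfl⟩ := List.mem_map.1 hs
        exact hmemζ i
      · rw [List.mem_reverse] at hs
        obtain ⟨t, ht, rfl⟩ := List.mem_map.1 hs
        obtain ⟨i, _, rfl⟩ := List.mem_map.1 ht
        exact hsym _ (hmemη i)
    · rw [List.prod_append, typ_prod', h0ζ, ← List.prod_inv_reverse, typ_prod', h0η]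
      group
    · have hlen : ((List.range b).map (typ Δζ) ++
          (((List.range a).map (typ Δη)).map (fun s => s⁻¹)).reverse).length = b + a := by
        simp
      rw [hlen]
      have h1 : (b + a : ℕ) ≤ w.length := by omega
      have h2 : ((b + a : ℕ) : ℝ) ≤ (w.length : ℝ) := by exact_mod_cast h1
      linarith
  · -- asymptotic
    set g := Δζ b * (Δη a)⁻¹ with hg
    have key : ∀ n, g * Δη (a + n) = Δζ (b + n) := by
      intro n
      induction n with
      | zero => simp [hg]
      | succ n ih =>
        have h1 := htyp n
        simp only [typ] at h1
        have e1 : a + (n + 1) = (n + a) + 1 := by omega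
        have e2 : b + (n + 1) = (n + b) + 1 := by omega
        have e3 : a + n = n + a := by omega
        have e4 : b + n = n + b := by omega
        rw [e1, e2]
        rw [e3, e4] at ih
        calc g * Δη (n + a + 1)
            = (g * Δη (n + a)) * ((Δη (n + a))⁻¹ * Δη (n + a + 1)) := by group
          _ = Δζ (n + b) * ((Δζ (n + b))⁻¹ * Δζ (n + b + 1)) := by rw [ih, h1]
          _ = Δζ (n + b + 1) := by group
    have hadj' : ∀ k, (cayley (S : Set G)).Adj (g * Δη k) (g * Δη (k + 1)) :=
      fun k => cayley_adj_mul' g (hΔη.1 k)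
    refine ⟨a + b, fun n => ?_, fun m => ?_⟩
    · by_cases hn : a ≤ n
      · refine ⟨b + (n - a), ?_⟩
        have hkey : g * Δη n = Δζ (b + (n - a)) := by
          have := key (n - a); rwa [Nat.add_sub_cancel' hn] at this
        exact ⟨SimpleGraph.Walk.nil.copy hkey.symm rfl, by simp⟩
      · refine ⟨b, ?_⟩
        obtain ⟨w', hw'⟩ := walk_along' (x := fun k => g * Δη k) hadj' n (a - n)
        have hend : g * Δη (n + (a - n)) = Δζ b := by
          rw [show n + (a - n) = a by omega]
          simpa using key 0
        exact ⟨w'.copy rfl hend, by rw [SimpleGraph.Walk.length_copy, hw']; push_cast; omega⟩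
    · by_cases hm : b ≤ m
      · refine ⟨a + (m - b), ?_⟩
        have hkey : g * Δη (a + (m - b)) = Δζ m := by
          have := key (m - b); rwa [Nat.add_sub_cancel' hm] at this
        exact ⟨SimpleGraph.Walk.nil.copy rfl hkey, by simp⟩
      · refine ⟨a, ?_⟩
        obtain ⟨w', hw'⟩ := walk_along' hΔζ.1 m (b - m)
        have hend : Δζ (m + (b - m)) = g * Δη a := by
          rw [show m + (b - m) = b by omega]
          simpa using (key 0).symm
        refine ⟨(w'.copy rfl hend).reverse, ?_⟩
        rw [SimpleGraph.Walk.length_reverse, SimpleGraph.Walk.length_copy, hw']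
        omega
end

section
/- Let S be a countable set. The tail equivalence relation on S^ℕ — where (x_n) R (y_n) iff there exist T_0, T_1 ∈ ℕ with x_{T_0+n} = y_{T_1+n} for all n — is a hyperfinite Borel equivalence relation. -/
namespace ST13

noncomputable section
open Classical

abbrev B := ℕ → Bool

def sh (d : ℕ) (z : B) : B := fun k => z (d + k)

lemma sh_sh (d e : ℕ) (z : B) : sh d (sh e z) = sh (e + d) z := by
  funext k; simp [sh, Nat.add_assoc]

lemma sh_zero (z : B) : sh 0 z = z := by funext k; simp [sh]

lemma sh_apply (d : ℕ) (z : B) (k : ℕ) : sh d z k = z (d + k) := rfl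

def Aper (z : B) : Prop := ∀ p d : ℕ, 0 < d → sh p z ≠ sh (p + d) z

lemma Aper.shift {z : B} (h : Aper z) (q : ℕ) : Aper (sh q z) := by
  intro p d hd
  have h1 := h (q + p) d hd
  intro he
  apply h1
  rw [show q + p + d = q + (p + d) by ring, ← sh_sh, ← sh_sh, he]

/-- binary content sum of a block -/
def S (z : B) : ℕ → ℕ → ℕ
  | _, 0 => 0
  | p, (L+1) => (cond (z p) 1 0) + 2 * S z (p+1) L

lemma S_lt (z : B) (p L : ℕ) : S z p L < 2 ^ L := by
  induction L generalizing p with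
  | zero => simp [S]
  | succ L ih =>
    have := ih (p+1)
    have h2 : (cond (z p) 1 0) ≤ 1 := by cases z p <;> simp
    simp only [S, pow_succ]
    omega

lemma S_inj (z z' : B) (p p' L : ℕ) (h : S z p L = S z' p' L) :
    ∀ k < L, z (p + k) = z' (p' + k) := by
  induction L generalizing p p' with
  | zero => intro k hk; omega
  | succ L ih =>
    simp only [S] at h
    have hb : z p = z' p' := by
      cases hzp : z p <;> cases hzp' : z' p' <;> simp [hzp, hzp'] at h ⊢ <;> omega
    have ht : S z (p+1) L = S z' (p'+1) L := by
      cases hzp : z p <;> cases hzp' : z' p' <;> rw [hzp, hzp'] at hb h <;>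
        simp at hb h ⊢ <;> omega
    intro k hk
    rcases k with _ | k
    · simpa using hb
    · have := ih (p+1) (p'+1) ht k (by omega)
      convert this using 2 <;> omega

/-- code of the block of length `L` starting at `p` -/
def bc (z : B) (p L : ℕ) : ℕ := 2 ^ L + S z p L

lemma bc_lt (z : B) (p L : ℕ) : bc z p L < 2 ^ (L + 1) := by
  have := S_lt z p L
  simp only [bc, pow_succ]; omega

lemma bc_inj {z z' : B} {p p' L L' : ℕ} (h : bc z p L = bc z' p' L') :
    L = L' ∧ ∀ k < L, z (p + k) = z' (p' + k) := by
  have hL : L = L' := by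
    by_contra hne
    rcases Nat.lt_or_ge L L' with hlt | hge
    · have h1 := bc_lt z p L
      have h2 : (2:ℕ) ^ (L+1) ≤ 2 ^ L' := Nat.pow_le_pow_right (by norm_num) (by omega)
      have h3 : (2:ℕ) ^ L' ≤ bc z' p' L' := Nat.le_add_right _ _
      omega
    · have hlt : L' < L := by omega
      have h1 := bc_lt z' p' L'
      have h2 : (2:ℕ) ^ (L'+1) ≤ 2 ^ L := Nat.pow_le_pow_right (by norm_num) (by omega)
      have h3 : (2:ℕ) ^ L ≤ bc z p L := Nat.le_add_right _ _
      omega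
  subst hL
  refine ⟨rfl, S_inj z z' p p' L ?_⟩
  simpa [bc] using h

/-- generic helper: shifting `sInf` of a predicate -/
lemma sInf_shift {R : ℕ → Prop} (h0 : ¬ R 0) (hne : ∃ d, R d) :
    sInf {d | R d} = 1 + sInf {d | R (1 + d)} := by
  obtain ⟨d, hd⟩ := hne
  have hne' : {d | R (1 + d)}.Nonempty := by
    rcases d with _ | d
    · exact absurd hd h0
    · exact ⟨d, by simpa [Nat.add_comm] using hd⟩
  have h1 : R (1 + sInf {d | R (1 + d)}) := Nat.sInf_mem hne'
  apply le_antisymm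
  · exact Nat.sInf_le h1
  · have h2 : sInf {d | R d} ∈ {d | R d} := Nat.sInf_mem ⟨_, h1⟩
    have h3 : sInf {d | R d} ≠ 0 := fun h => h0 (by simpa [h] using h2)
    have h4 : R (1 + (sInf {d | R d} - 1)) := by
      have : 1 + (sInf {d | R d} - 1) = sInf {d | R d} := by omega
      rw [this]; exact h2
    have h5 : (sInf {d | R d} - 1) ∈ {d | R (1 + d)} := h4
    have := Nat.sInf_le h5
    omega

/-- generic helper: sInf of a translated set -/
lemma sInf_translate {T : Set ℕ} (hT : T.Nonempty) (c : ℕ) :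
    sInf {p | ∃ q ∈ T, p = c + q} = c + sInf T := by
  have h1 : sInf T ∈ T := Nat.sInf_mem hT
  apply le_antisymm
  · exact Nat.sInf_le ⟨sInf T, h1, rfl⟩
  · obtain ⟨q, hq, he⟩ := Nat.sInf_mem (s := {p | ∃ q ∈ T, p = c + q}) ⟨c + sInf T, sInf T, h1, rfl⟩
    have := Nat.sInf_le hq
    omega


/-! ## marker hierarchy -/

def nxt (T : Set B) (z : B) : ℕ := sInf {d : ℕ | 0 < d ∧ sh d z ∈ T}

def Q (T : Set B) (z : B) : ℕ → ℕ
  | 0 => 0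
  | (j+1) => Q T z j + nxt T (sh (Q T z j) z)

/-- code of the `j`-th block -/
def cc (T : Set B) (z : B) (j : ℕ) : ℕ :=
  bc z (Q T z j) (nxt T (sh (Q T z j) z))

/-- Up-step at block `j` -/
def U (T : Set B) (z : B) (j : ℕ) : Prop := cc T z j < cc T z (j+1)

/-- distance to next non-Up (Down) step -/
def dD (T : Set B) (z : B) (i : ℕ) : ℕ := sInf {d | ¬ U T z (i + d)}
/-- distance to next Up step -/
def dU (T : Set B) (z : B) (i : ℕ) : ℕ := sInf {d | U T z (i + d)}

def cand (T : Set B) (z : B) (i : ℕ) : Prop :=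
  (U T z i ∧ ¬ U T z (i+1)) ∨
  (U T z i ∧ U T z (i+1) ∧ Odd (dD T z i)) ∨
  (¬ U T z i ∧ ¬ U T z (i+1) ∧ Even (dU T z i))

def M : ℕ → Set B
  | 0 => Set.univ
  | (n+1) => {z | z ∈ M n ∧ cand (M n) z 0 ∧ ¬ cand (M n) z 1}

lemma M_succ_subset (n : ℕ) : M (n+1) ⊆ M n := fun _ h => h.1

lemma M_subset {m n : ℕ} (h : n ≤ m) : M m ⊆ M n := by
  induction m with
  | zero => have : n = 0 := by omega
            subst this; exact subset_rfl
  | succ m ih =>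
    rcases Nat.eq_or_lt_of_le h with he | hl
    · subst he; exact subset_rfl
    · exact (M_succ_subset m).trans (ih (by omega))

/-! ### transport lemmas (pure, no hypotheses) -/

lemma S_sh (z : B) (q p L : ℕ) : S (sh q z) p L = S z (q + p) L := by
  induction L generalizing p with
  | zero => simp [S]
  | succ L ih =>
    simp only [S, sh_apply, ih (p+1)]
    rw [Nat.add_assoc]

lemma bc_sh (z : B) (q p L : ℕ) : bc (sh q z) p L = bc z (q + p) L := by
  simp [bc, S_sh]

lemma Q_add (T : Set B) (z : B) (i j : ℕ) :
    Q T z (i + j) = Q T z i + Q T (sh (Q T z i) z) j := by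
  induction j with
  | zero => simp [Q]
  | succ j ih =>
    have h1 : Q T z (i + j + 1) = Q T z (i+j) + nxt T (sh (Q T z (i+j)) z) := rfl
    have h2 : Q T (sh (Q T z i) z) (j+1) = Q T (sh (Q T z i) z) j
        + nxt T (sh (Q T (sh (Q T z i) z) j) (sh (Q T z i) z)) := rfl
    rw [show i + (j+1) = (i+j)+1 by omega, h1, h2, sh_sh, ih]
    ring

lemma cc_add (T : Set B) (z : B) (i j : ℕ) :
    cc T (sh (Q T z i) z) j = cc T z (i + j) := by
  unfold cc
  rw [show Q T z (i+j) = Q T z i + Q T (sh (Q T z i) z) j from Q_add T z i j]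
  rw [sh_sh, bc_sh]

/-! ### abstract level lemmas -/

lemma antitone_of_step {g : ℕ → ℕ} (h : ∀ t, g (t+1) ≤ g t) :
    ∀ s t, s ≤ t → g t ≤ g s := by
  intro s t hst
  induction t with
  | zero => have : s = 0 := by omega
            simp [this]
  | succ t ih =>
    rcases Nat.eq_or_lt_of_le hst with he | hl
    · simp [← he]
    · exact (h t).trans (ih (by omega))

lemma eventually_const_of_antitone {g : ℕ → ℕ} (h : ∀ t, g (t+1) ≤ g t) :
    ∃ t0, ∀ t, t0 ≤ t → g t = g t0 := by
  obtain ⟨t0, ht0⟩ := Nat.sInf_mem (s := Set.range g) ⟨g 0, 0, rfl⟩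
  refine ⟨t0, fun t ht => ?_⟩
  have h1 : g t ≤ g t0 := antitone_of_step h t0 t ht
  have h2 : sInf (Set.range g) ≤ g t := Nat.sInf_le ⟨t, rfl⟩
  omega

section Level

variable {T : Set B} {Gb : ℕ}

def Hyp (T : Set B) (Gb : ℕ) : Prop := ∀ v : B, Aper v → ∃ p ≤ Gb, sh p v ∈ T

lemma nxt_nonempty (hT : Hyp T Gb) {z : B} (hz : Aper z) :
    {d : ℕ | 0 < d ∧ sh d z ∈ T}.Nonempty := by
  obtain ⟨p, hp, hm⟩ := hT (sh 1 z) (hz.shift 1)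
  exact ⟨1 + p, by omega, by rwa [sh_sh] at hm⟩

lemma nxt_pos (hT : Hyp T Gb) {z : B} (hz : Aper z) : 0 < nxt T z :=
  (Nat.sInf_mem (nxt_nonempty hT hz)).1

lemma nxt_mem (hT : Hyp T Gb) {z : B} (hz : Aper z) : sh (nxt T z) z ∈ T :=
  (Nat.sInf_mem (nxt_nonempty hT hz)).2

lemma nxt_le (hT : Hyp T Gb) {z : B} (hz : Aper z) : nxt T z ≤ Gb + 1 := by
  obtain ⟨p, hp, hm⟩ := hT (sh 1 z) (hz.shift 1)
  have : nxt T z ≤ 1 + p := Nat.sInf_le ⟨by omega, by rwa [sh_sh] at hm⟩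
  omega

lemma nxt_min {z : B} {d : ℕ} (hd : 0 < d) (hm : sh d z ∈ T) : nxt T z ≤ d :=
  Nat.sInf_le ⟨hd, hm⟩

lemma Q_succ (z : B) (j : ℕ) :
    Q T z (j+1) = Q T z j + nxt T (sh (Q T z j) z) := rfl

lemma Q_lt_succ (hT : Hyp T Gb) {z : B} (hz : Aper z) (j : ℕ) :
    Q T z j < Q T z (j+1) := by
  rw [Q_succ]
  have := nxt_pos hT (hz.shift (Q T z j))
  omega

lemma Q_le (hT : Hyp T Gb) {z : B} (hz : Aper z) (j : ℕ) :
    Q T z j ≤ j * (Gb + 1) := by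
  induction j with
  | zero => simp [Q]
  | succ j ih =>
    rw [Q_succ]
    have := nxt_le hT (hz.shift (Q T z j))
    have : Q T z j + nxt T (sh (Q T z j) z) ≤ j * (Gb+1) + (Gb+1) := by omega
    calc Q T z j + nxt T (sh (Q T z j) z) ≤ j * (Gb+1) + (Gb+1) := this
      _ = (j+1) * (Gb+1) := by ring

lemma Q_ge (hT : Hyp T Gb) {z : B} (hz : Aper z) (j : ℕ) : j ≤ Q T z j := by
  induction j with
  | zero => simp [Q]
  | succ j ih =>
    have := Q_lt_succ hT hz j
    omega

lemma Q_mem (hT : Hyp T Gb) {z : B} (hz : Aper z) (hm : z ∈ T) (j : ℕ) :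
    sh (Q T z j) z ∈ T := by
  induction j with
  | zero => simpa [Q, sh_zero]
  | succ j ih =>
    rw [Q_succ, ← sh_sh]
    exact nxt_mem hT (hz.shift (Q T z j))

lemma Q_cover (hT : Hyp T Gb) {z : B} (hz : Aper z) (hm : z ∈ T) {q : ℕ}
    (hq : sh q z ∈ T) : ∃ j, Q T z j = q := by
  have hstep : ∀ j, Q T z j < q → Q T z (j+1) ≤ q := by
    intro j hj
    have hd : 0 < q - Q T z j := by omega
    have hmm : sh (q - Q T z j) (sh (Q T z j) z) ∈ T := by
      rw [sh_sh]
      have : Q T z j + (q - Q T z j) = q := by omega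
      rwa [this]
    have := nxt_min (T := T) hd hmm
    rw [Q_succ]; omega
  have hne : ∃ j, q ≤ Q T z j := ⟨q, Q_ge hT hz q⟩
  set j := Nat.find hne with hjdef
  have hj : q ≤ Q T z j := Nat.find_spec hne
  rcases Nat.eq_or_lt_of_le hj with he | hl
  · exact ⟨j, he.symm⟩
  · exfalso
    rcases Nat.eq_zero_or_pos j with h0 | hpos
    · rw [h0] at hl; simp [Q] at hl
    · have hprev : ¬ q ≤ Q T z (j - 1) := Nat.find_min hne (by omega)
      have : Q T z (j - 1) < q := by omega
      have h2 := hstep (j-1) this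
      have : j - 1 + 1 = j := by omega
      rw [this] at h2
      omega

lemma cc_bound (hT : Hyp T Gb) {z : B} (hz : Aper z) (j : ℕ) :
    cc T z j < 2 ^ (Gb + 2) := by
  have h1 := bc_lt z (Q T z j) (nxt T (sh (Q T z j) z))
  have h2 := nxt_le hT (hz.shift (Q T z j))
  have h3 : (2:ℕ) ^ (nxt T (sh (Q T z j) z) + 1) ≤ 2 ^ (Gb + 2) :=
    Nat.pow_le_pow_right (by norm_num) (by omega)
  calc cc T z j < 2 ^ (nxt T (sh (Q T z j) z) + 1) := h1
    _ ≤ 2 ^ (Gb + 2) := h3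

/-- there is always a later non-Up step -/
lemma exD (hT : Hyp T Gb) {z : B} (hz : Aper z) (i : ℕ) : ∃ d, ¬ U T z (i + d) := by
  by_contra hc
  push_neg at hc
  have hstep : ∀ t, cc T z i + t ≤ cc T z (i + t) := by
    intro t
    induction t with
    | zero => simp
    | succ t ih =>
      have := hc t
      unfold U at this
      have h2 : i + t + 1 = i + (t+1) := by omega
      rw [h2] at this
      omega
  have h1 := hstep (2 ^ (Gb + 2))
  have h2 := cc_bound hT hz (i + 2 ^ (Gb+2))
  omega

/-- there is always a later Up step -/
lemma exU (hT : Hyp T Gb) {z : B} (hz : Aper z) (i : ℕ) : ∃ d, U T z (i + d) := by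
  by_contra hc
  push_neg at hc
  -- codes are non-increasing from i on
  have hni : ∀ t, cc T z (i + (t+1)) ≤ cc T z (i + t) := by
    intro t
    have := hc t
    unfold U at this
    have h2 : i + t + 1 = i + (t+1) := by omega
    rw [h2] at this
    omega
  obtain ⟨t0, ht0⟩ := eventually_const_of_antitone (g := fun t => cc T z (i + t)) hni
  set j0 := i + t0 with hj0
  set L := nxt T (sh (Q T z j0) z) with hL
  have hLpos : 0 < L := nxt_pos hT (hz.shift _)
  -- all later blocks have the same code
  have hcc : ∀ t, cc T z (j0 + t) = cc T z j0 := by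
    intro t
    have h1 := ht0 (t0 + t) (by omega)
    have h2 : i + (t0 + t) = j0 + t := by omega
    rw [h2] at h1
    simpa using h1
  -- hence equal lengths and contents
  have hlen : ∀ t, nxt T (sh (Q T z (j0 + t)) z) = L := by
    intro t
    have := hcc t
    unfold cc at this
    exact (bc_inj this).1
  have hcont : ∀ t, ∀ k < L, z (Q T z (j0 + t) + k) = z (Q T z j0 + k) := by
    intro t k hk
    have := hcc t
    unfold cc at this
    rw [hlen t] at this
    exact (bc_inj this).2 k hk
  have hQ : ∀ t, Q T z (j0 + t) = Q T z j0 + t * L := by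
    intro t
    induction t with
    | zero => simp
    | succ t ih =>
      have h1 : j0 + (t + 1) = (j0 + t) + 1 := by omega
      rw [h1, Q_succ, hlen t, ih]
      ring
  -- periodicity of the tail from Q j0 with period L
  have hper : ∀ m, z (Q T z j0 + m) = z (Q T z j0 + L + m) := by
    intro m
    have hdiv : ∃ t k, k < L ∧ m = t * L + k := by
      refine ⟨m / L, m % L, Nat.mod_lt m hLpos, ?_⟩
      have := Nat.div_add_mod m L
      have h2 : L * (m / L) = (m / L) * L := by ring
      omega
    obtain ⟨t, k, hk, hm⟩ := hdiv
    have e1 : Q T z j0 + m = Q T z (j0 + t) + k := by rw [hQ t]; omega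
    have e2 : Q T z j0 + L + m = Q T z (j0 + (t+1)) + k := by
      rw [hQ (t+1)]
      have h3 : (t+1) * L = t * L + L := by ring
      omega
    calc z (Q T z j0 + m) = z (Q T z (j0+t) + k) := by rw [e1]
      _ = z (Q T z j0 + k) := hcont t k hk
      _ = z (Q T z (j0+(t+1)) + k) := (hcont (t+1) k hk).symm
      _ = z (Q T z j0 + L + m) := by rw [e2]
  exact hz (Q T z j0) L hLpos (by
    funext m
    have := hper m
    simp only [sh_apply]
    exact this)

end Level

section Level2

variable {T : Set B} {Gb : ℕ}

lemma dD_mem (hT : Hyp T Gb) {z : B} (hz : Aper z) (i : ℕ) :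
    ¬ U T z (i + dD T z i) := Nat.sInf_mem (exD hT hz i)

lemma dU_mem (hT : Hyp T Gb) {z : B} (hz : Aper z) (i : ℕ) :
    U T z (i + dU T z i) := Nat.sInf_mem (exU hT hz i)

lemma dD_lt {z : B} {i d : ℕ} (hd : d < dD T z i) : U T z (i + d) := by
  by_contra hc
  have : dD T z i ≤ d := Nat.sInf_le (show d ∈ {d | ¬ U T z (i + d)} from hc)
  omega

lemma dU_lt {z : B} {i d : ℕ} (hd : d < dU T z i) : ¬ U T z (i + d) := by
  intro hc
  have : dU T z i ≤ d := Nat.sInf_le (show d ∈ {d | U T z (i + d)} from hc)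
  omega

lemma dD_shift (hT : Hyp T Gb) {z : B} (hz : Aper z) {i : ℕ} (h : 1 ≤ dD T z i) :
    dD T z i = 1 + dD T z (i + 1) := by
  have h0 : ¬ ¬ U T z (i + 0) := by
    intro hc
    have : dD T z i ≤ 0 := Nat.sInf_le (show (0:ℕ) ∈ {d | ¬ U T z (i + d)} from hc)
    omega
  have hs := sInf_shift (R := fun d => ¬ U T z (i + d)) h0 (exD hT hz i)
  have hset : {d : ℕ | ¬ U T z (i + (1 + d))} = {d : ℕ | ¬ U T z (i + 1 + d)} := by
    ext d; simp only [Set.mem_setOf_eq, Nat.add_assoc]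
  calc dD T z i = sInf {d | ¬ U T z (i + d)} := rfl
    _ = 1 + sInf {d : ℕ | ¬ U T z (i + (1 + d))} := hs
    _ = 1 + sInf {d : ℕ | ¬ U T z (i + 1 + d)} := by rw [hset]
    _ = 1 + dD T z (i+1) := rfl

lemma dU_shift (hT : Hyp T Gb) {z : B} (hz : Aper z) {i : ℕ} (h : 1 ≤ dU T z i) :
    dU T z i = 1 + dU T z (i + 1) := by
  have h0 : ¬ U T z (i + 0) := by
    intro hc
    have : dU T z i ≤ 0 := Nat.sInf_le (show (0:ℕ) ∈ {d | U T z (i + d)} from hc)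
    omega
  have hs := sInf_shift (R := fun d => U T z (i + d)) h0 (exU hT hz i)
  have hset : {d : ℕ | U T z (i + (1 + d))} = {d : ℕ | U T z (i + 1 + d)} := by
    ext d; simp only [Set.mem_setOf_eq, Nat.add_assoc]
  calc dU T z i = sInf {d | U T z (i + d)} := rfl
    _ = 1 + sInf {d : ℕ | U T z (i + (1 + d))} := hs
    _ = 1 + sInf {d : ℕ | U T z (i + 1 + d)} := by rw [hset]
    _ = 1 + dU T z (i+1) := rfl

lemma dD_ge_two (hT : Hyp T Gb) {z : B} (hz : Aper z) {i : ℕ}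
    (h0 : U T z i) (h1 : U T z (i+1)) : 2 ≤ dD T z i := by
  by_contra hc
  push_neg at hc
  have hm := dD_mem hT hz i
  have hd : dD T z i = 0 ∨ dD T z i = 1 := by omega
  rcases hd with h | h <;> rw [h] at hm
  · exact hm (by simpa using h0)
  · exact hm h1

lemma dU_ge_two (hT : Hyp T Gb) {z : B} (hz : Aper z) {i : ℕ}
    (h0 : ¬ U T z i) (h1 : ¬ U T z (i+1)) : 2 ≤ dU T z i := by
  by_contra hc
  push_neg at hc
  have hm := dU_mem hT hz i
  have hd : dU T z i = 0 ∨ dU T z i = 1 := by omega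
  rcases hd with h | h <;> rw [h] at hm
  · exact h0 (by simpa using hm)
  · exact h1 hm

/-- candidates occur with gaps at most 2 -/
lemma cand_gap (hT : Hyp T Gb) {z : B} (hz : Aper z) (i : ℕ) :
    cand T z i ∨ cand T z (i+1) ∨ cand T z (i+2) := by
  by_cases hU0 : U T z i
  · by_cases hU1 : U T z (i+1)
    · -- UU
      have h2 := dD_ge_two hT hz hU0 hU1
      by_cases hodd : Odd (dD T z i)
      · exact Or.inl (Or.inr (Or.inl ⟨hU0, hU1, hodd⟩))
      · -- even ≥ 2, so dD (i+1) is odd ≥ 1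
        have hsh := dD_shift hT hz (i := i) (by omega)
        have hodd1 : Odd (dD T z (i+1)) := by
          rcases Nat.even_or_odd (dD T z i) with he | ho
          · rcases he with ⟨k, hk⟩
            exact ⟨(dD T z (i+1) - 1)/2 , by omega⟩
          · exact absurd ho hodd
        rcases Nat.eq_or_lt_of_le (show 1 ≤ dD T z (i+1) by
          rcases hodd1 with ⟨k, hk⟩; omega) with he | hgt
        · -- dD(i+1) = 1 : ¬U (i+2), so UD at i+1
          have : ¬ U T z (i+1+1) := by
            have := dD_mem hT hz (i+1)
            rw [← he] at this
            simpa using this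
          exact Or.inr (Or.inl (Or.inl ⟨hU1, by simpa [show i+1+1 = i+2 by omega] using this⟩))
        · -- dD(i+1) ≥ 2 : U(i+2), UU-odd at i+1
          have hU2 : U T z (i+2) := by
            have := dD_lt (T := T) (z := z) (i := i+1) (d := 1) (by omega)
            simpa [show i+1+1 = i+2 by omega] using this
          exact Or.inr (Or.inl (Or.inr (Or.inl ⟨hU1, by
            simpa [show i+1+1 = i+2 by omega] using hU2, hodd1⟩)))
    · exact Or.inl (Or.inl ⟨hU0, hU1⟩)
  · by_cases hU1 : U T z (i+1)
    · -- DU : look at i+1 and i+2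
      by_cases hU2 : U T z (i+2)
      · have h2 := dD_ge_two hT hz (i := i+1) hU1 (by simpa [show i+1+1 = i+2 by omega] using hU2)
        by_cases hodd : Odd (dD T z (i+1))
        · exact Or.inr (Or.inl (Or.inr (Or.inl ⟨hU1, by
            simpa [show i+1+1 = i+2 by omega] using hU2, hodd⟩)))
        · have hsh := dD_shift hT hz (i := i+1) (by omega)
          have hodd2 : Odd (dD T z (i+2)) := by
            rcases Nat.even_or_odd (dD T z (i+1)) with he | ho
            · rcases he with ⟨k, hk⟩
              refine ⟨(dD T z (i+2) - 1)/2, by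
                have : i + 1 + 1 = i + 2 := by omega
                rw [this] at hsh
                omega⟩
            · exact absurd ho hodd
          have h1le : 1 ≤ dD T z (i+2) := by rcases hodd2 with ⟨k, hk⟩; omega
          rcases Nat.eq_or_lt_of_le h1le with he | hgt
          · have : ¬ U T z (i+2+1) := by
              have := dD_mem hT hz (i+2)
              rw [← he] at this
              simpa using this
            exact Or.inr (Or.inr (Or.inl ⟨hU2, this⟩))
          · have hU3 : U T z (i+2+1) := by
              have := dD_lt (T := T) (z := z) (i := i+2) (d := 1) (by omega)
              simpa using this
            exact Or.inr (Or.inr (Or.inr (Or.inl ⟨hU2, hU3, hodd2⟩)))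
      · exact Or.inr (Or.inl (Or.inl ⟨hU1, by simpa [show i+1+1 = i+2 by omega] using hU2⟩))
    · -- DD
      have h2 := dU_ge_two hT hz hU0 hU1
      by_cases hev : Even (dU T z i)
      · exact Or.inl (Or.inr (Or.inr ⟨hU0, hU1, hev⟩))
      · -- odd ≥ 3
        have hodd : Odd (dU T z i) := Nat.odd_iff.mpr (by
          rcases Nat.even_or_odd (dU T z i) with he | ho
          · exact absurd he hev
          · exact Nat.odd_iff.mp ho)
        have h3 : 3 ≤ dU T z i := by
          rcases hodd with ⟨k, hk⟩; omega
        have hsh := dU_shift hT hz (i := i) (by omega)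
        have hev1 : Even (dU T z (i+1)) := by
          rcases hodd with ⟨k, hk⟩
          exact ⟨k, by omega⟩
        have h21 : 2 ≤ dU T z (i+1) := by omega
        have hU2 : ¬ U T z (i+2) := by
          have := dU_lt (T := T) (z := z) (i := i+1) (d := 1) (by omega)
          simpa [show i+1+1 = i+2 by omega] using this
        exact Or.inr (Or.inl (Or.inr (Or.inr ⟨hU1, by
          simpa [show i+1+1 = i+2 by omega] using hU2, hev1⟩)))

/-- candidate runs have length at most 2 -/
lemma cand_run (hT : Hyp T Gb) {z : B} (hz : Aper z) (i : ℕ)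
    (h0 : cand T z i) (h1 : cand T z (i+1)) : ¬ cand T z (i+2) := by
  rcases h0 with ⟨hu, hnu⟩ | ⟨hu, hu1, hodd⟩ | ⟨hnu, hnu1, hev⟩
  · -- UD at i; cand (i+1) must be DD-even
    rcases h1 with ⟨hu1, _⟩ | ⟨hu1, _, _⟩ | ⟨_, hnu2, hev1⟩
    · exact absurd hu1 hnu
    · exact absurd hu1 hnu
    · -- DD-even at i+1
      have h2 := dU_ge_two hT hz (i := i+1) hnu hnu2
      have hsh := dU_shift hT hz (i := i+1) (by omega)
      intro h2c
      rcases h2c with ⟨hu2, _⟩ | ⟨hu2, _, _⟩ | ⟨_, _, hev2⟩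
      · exact absurd hu2 (by simpa [show i+1+1 = i+2 by omega] using hnu2)
      · exact absurd hu2 (by simpa [show i+1+1 = i+2 by omega] using hnu2)
      · -- Even dU(i+2) contradicts Even dU(i+1) with shift
        have : i + 1 + 1 = i + 2 := by omega
        rw [this] at hsh
        rcases hev1 with ⟨k, hk⟩
        rcases hev2 with ⟨k', hk'⟩
        omega
  · -- UU-odd at i: dD i odd ≥ 3 (since ≥ 2), so cand (i+1) impossible
    exfalso
    have h2 := dD_ge_two hT hz hu hu1
    have h3 : 3 ≤ dD T z i := by
      rcases hodd with ⟨k, hk⟩; omega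
    have hsh := dD_shift hT hz (i := i) (by omega)
    have hev1 : Even (dD T z (i+1)) := by
      rcases hodd with ⟨k, hk⟩
      exact ⟨k, by omega⟩
    have h21 : 2 ≤ dD T z (i+1) := by omega
    have hU2 : U T z (i+2) := by
      have := dD_lt (T := T) (z := z) (i := i+1) (d := 1) (by omega)
      simpa [show i+1+1 = i+2 by omega] using this
    rcases h1 with ⟨_, hnu2⟩ | ⟨_, _, hodd1⟩ | ⟨hnu1, _, _⟩
    · exact hnu2 (by simpa [show i+1+1 = i+2 by omega] using hU2)
    · rcases hodd1 with ⟨k, hk⟩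
      rcases hev1 with ⟨k', hk'⟩
      omega
    · exact hnu1 hu1
  · -- DD-even at i: dU i even ≥ 2: dU (i+1) odd: cand (i+1) impossible
    exfalso
    have h2 := dU_ge_two hT hz hnu hnu1
    have hsh := dU_shift hT hz (i := i) (by omega)
    have hodd1 : Odd (dU T z (i+1)) := by
      rcases hev with ⟨k, hk⟩
      exact ⟨dU T z (i+1)/2, by omega⟩
    rcases h1 with ⟨hu1, _⟩ | ⟨hu1, _, _⟩ | ⟨_, _, hev1⟩
    · exact hnu1 hu1
    · exact hnu1 hu1
    · rcases hodd1 with ⟨k, hk⟩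
      rcases hev1 with ⟨k', hk'⟩
      omega

/-- a selected index within distance 3 -/
lemma sel_exists (hT : Hyp T Gb) {z : B} (hz : Aper z) (i : ℕ) :
    ∃ j ≤ 3, cand T z (i+j) ∧ ¬ cand T z (i+j+1) := by
  have hg := cand_gap hT hz i
  have key : ∀ c, cand T z c → (∃ j ≤ 1, cand T z (c+j) ∧ ¬ cand T z (c+j+1)) := by
    intro c hc
    by_cases h1 : cand T z (c+1)
    · refine ⟨1, by omega, h1, ?_⟩
      have := cand_run hT hz c hc h1
      simpa [show c+1+1 = c+2 by omega] using this
    · exact ⟨0, by omega, by simpa using hc, by simpa using h1⟩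
  rcases hg with h | h | h
  · obtain ⟨j, hj, h1, h2⟩ := key i h
    exact ⟨j, by omega, h1, h2⟩
  · obtain ⟨j, hj, h1, h2⟩ := key (i+1) h
    exact ⟨1+j, by omega, by rwa [show i+(1+j) = i+1+j by omega], by
      rwa [show i+(1+j)+1 = i+1+j+1 by omega]⟩
  · obtain ⟨j, hj, h1, h2⟩ := key (i+2) h
    exact ⟨2+j, by omega, by rwa [show i+(2+j) = i+2+j by omega], by
      rwa [show i+(2+j)+1 = i+2+j+1 by omega]⟩

/-! ### transport of `U`, `dD`, `dU`, `cand` -/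

lemma U_transport (z : B) (i j : ℕ) :
    U T (sh (Q T z i) z) j ↔ U T z (i + j) := by
  unfold U
  rw [cc_add, cc_add, show i + (j+1) = (i+j)+1 by omega]

lemma dD_transport (z : B) (i j : ℕ) :
    dD T (sh (Q T z i) z) j = dD T z (i + j) := by
  unfold dD
  congr 1
  ext d
  simp only [Set.mem_setOf_eq]
  rw [U_transport, show i + (j+d) = i+j+d by omega]

lemma dU_transport (z : B) (i j : ℕ) :
    dU T (sh (Q T z i) z) j = dU T z (i + j) := by
  unfold dU
  congr 1
  ext d
  simp only [Set.mem_setOf_eq]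
  rw [U_transport, show i + (j+d) = i+j+d by omega]

lemma cand_transport (z : B) (i j : ℕ) :
    cand T (sh (Q T z i) z) j ↔ cand T z (i + j) := by
  unfold cand
  rw [U_transport, U_transport, dD_transport, dU_transport,
    show i + (j+1) = (i+j)+1 by omega]

end Level2


/-! ### the main marker existence induction -/

def H : ℕ → ℕ
  | 0 => 0
  | (n+1) => 4 * (H n + 1)

theorem exists_marker : ∀ n : ℕ, Hyp (M n) (H n) := by
  intro n
  induction n with
  | zero => intro v _; exact ⟨0, le_refl _, by simp [M, sh_zero]⟩
  | succ n ih =>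
    intro v hv
    obtain ⟨q0, hq0, hm0⟩ := ih v hv
    set w := sh q0 v with hw
    have hwa : Aper w := hv.shift q0
    obtain ⟨j, hj, hc1, hc2⟩ := sel_exists ih hwa 0
    simp only [Nat.zero_add] at hc1 hc2
    set P := Q (M n) w j with hP
    have hmem : sh P w ∈ M (n+1) := by
      refine ⟨Q_mem ih hwa hm0 j, ?_, ?_⟩
      · rw [cand_transport]
        simpa using hc1
      · rw [cand_transport]
        simpa using hc2
    refine ⟨q0 + P, ?_, by rwa [← sh_sh]⟩
    have hPle : P ≤ j * (H n + 1) := Q_le ih hwa j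
    have : j * (H n + 1) ≤ 3 * (H n + 1) := Nat.mul_le_mul_right _ hj
    show q0 + P ≤ H (n+1)
    have hH : H (n+1) = 4 * (H n + 1) := rfl
    omega

lemma M_Hyp (n : ℕ) : Hyp (M n) (H n) := exists_marker n

/-! ### returns -/

theorem return_ge : ∀ n : ℕ, ∀ z : B, Aper z → z ∈ M n →
    ∀ d : ℕ, 0 < d → d < 2 ^ n → sh d z ∉ M n := by
  intro n
  induction n with
  | zero => intro z _ _ d _ hd; omega
  | succ n ih =>
    intro z hz hm d hd hdlt hmem
    set ν := nxt (M n) z with hν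
    have hν_ge : 2 ^ n ≤ ν := by
      by_contra hc
      push_neg at hc
      exact ih z hz hm.1 ν (nxt_pos (M_Hyp n) hz) hc (nxt_mem (M_Hyp n) hz)
    have hd_ge : ν ≤ d := nxt_min hd (M_succ_subset n hmem)
    rcases Nat.eq_or_lt_of_le hd_ge with he | hlt
    · -- adjacent selected markers: contradiction with ¬ cand 1
      have hc2 := hm.2.2
      apply hc2
      have h1 : sh d z = sh (Q (M n) z 1) z := by
        rw [← he]
        congr 1
        simp [Q, Q_succ, sh_zero]
        exact hν
      have hc1 : cand (M n) (sh (Q (M n) z 1) z) 0 := by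
        rw [← h1]; exact hmem.2.1
      rw [cand_transport] at hc1
      simpa using hc1
    · -- d strictly beyond ν : use IH at sh ν z
      have he : sh (d - ν) (sh ν z) = sh d z := by
        have h9 : ν + (d - ν) = d := by omega
        rw [sh_sh, h9]
      have hν_mem : sh ν z ∈ M n := nxt_mem (M_Hyp n) hz
      have : sh (d - ν) (sh ν z) ∉ M n := by
        have hpos : 0 < d - ν := by omega
        have hlt2 : d - ν < 2 ^ n := by
          have h2 : (2:ℕ)^(n+1) = 2^n + 2^n := by ring
          omega
        exact ih (sh ν z) (hz.shift ν) hν_mem (d - ν) hpos hlt2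
      rw [he] at this
      exact this (M_succ_subset n hmem)

/-! ### the frozen set and the depth functions -/

def Mω : Set B := ⋂ n, M n

lemma frozen_unique {z : B} (hz : Aper z) {d : ℕ} (h1 : z ∈ Mω)
    (h2 : sh d z ∈ Mω) (hd : 0 < d) : False := by
  obtain ⟨n, hn⟩ : ∃ n, d < 2 ^ n := ⟨d, Nat.lt_two_pow_self⟩
  exact return_ge n z hz (Set.mem_iInter.mp h1 n) d hd hn (Set.mem_iInter.mp h2 n)

/-- depth of the first non-frozen level-`n` marker -/
def dep (n : ℕ) (z : B) : ℕ := sInf {p | sh p z ∈ M n ∧ sh p z ∉ Mω}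

def Kb (n : ℕ) : ℕ := 2 * H n + 2

lemma dep_set_nonempty {n : ℕ} {z : B} (hz : Aper z) :
    ∃ p ≤ Kb n, sh p z ∈ M n ∧ sh p z ∉ Mω := by
  obtain ⟨q0, hq0, hm0⟩ := M_Hyp n z hz
  by_cases hf : sh q0 z ∈ Mω
  · -- take the next marker after q0
    set ν := nxt (M n) (sh q0 z) with hν
    refine ⟨q0 + ν, ?_, ?_, ?_⟩
    · have := nxt_le (M_Hyp n) (hz.shift q0)
      unfold Kb
      omega
    · rw [← sh_sh]
      exact nxt_mem (M_Hyp n) (hz.shift q0)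
    · intro hc
      rw [← sh_sh] at hc
      exact frozen_unique (hz.shift q0) hf hc (nxt_pos (M_Hyp n) (hz.shift q0))
  · exact ⟨q0, by unfold Kb; omega, hm0, hf⟩

lemma dep_le {n : ℕ} {z : B} (hz : Aper z) : dep n z ≤ Kb n := by
  obtain ⟨p, hp, h1, h2⟩ := dep_set_nonempty (n := n) hz
  exact le_trans (Nat.sInf_le ⟨h1, h2⟩) hp

lemma dep_spec {n : ℕ} {z : B} (hz : Aper z) :
    sh (dep n z) z ∈ M n ∧ sh (dep n z) z ∉ Mω := by
  obtain ⟨p, _, h1, h2⟩ := dep_set_nonempty (n := n) hz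
  exact Nat.sInf_mem (⟨p, h1, h2⟩ : {p : ℕ | sh p z ∈ M n ∧ sh p z ∉ Mω}.Nonempty)

lemma dep_min {n : ℕ} {z : B} {p : ℕ} (h1 : sh p z ∈ M n) (h2 : sh p z ∉ Mω) :
    dep n z ≤ p := Nat.sInf_le ⟨h1, h2⟩

lemma dep_mono {n : ℕ} {z : B} (hz : Aper z) : dep n z ≤ dep (n+1) z := by
  have h := dep_spec (n := n+1) hz
  exact dep_min (M_succ_subset n h.1) h.2

/-- the `n`-th top of `z` -/
def top (n : ℕ) (z : B) : B := sh (dep n z) z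

/-! ### additivity of depth, composition of tops -/

lemma dep_shift {n a : ℕ} {z : B} (hz : Aper z)
    (ha : ∀ p < a, ¬(sh p z ∈ M n ∧ sh p z ∉ Mω)) :
    dep n z = a + dep n (sh a z) := by
  have hset : {p | sh p z ∈ M n ∧ sh p z ∉ Mω}
      = {p | ∃ q ∈ {q | sh q (sh a z) ∈ M n ∧ sh q (sh a z) ∉ Mω}, p = a + q} := by
    ext p
    simp only [Set.mem_setOf_eq]
    constructor
    · rintro ⟨h1, h2⟩
      have hge : a ≤ p := by
        by_contra hc
        exact ha p (by omega) ⟨h1, h2⟩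
      refine ⟨p - a, ⟨?_, ?_⟩, by omega⟩
      · rw [sh_sh, show a + (p - a) = p by omega]; exact h1
      · rw [sh_sh, show a + (p - a) = p by omega]; exact h2
    · rintro ⟨q, ⟨h1, h2⟩, he⟩
      rw [sh_sh] at h1 h2
      subst he
      exact ⟨h1, h2⟩
  have hne : {q | sh q (sh a z) ∈ M n ∧ sh q (sh a z) ∉ Mω}.Nonempty := by
    obtain ⟨p, _, h1, h2⟩ := dep_set_nonempty (n := n) (hz.shift a)
    exact ⟨p, h1, h2⟩
  calc dep n z = sInf {p | sh p z ∈ M n ∧ sh p z ∉ Mω} := rfl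
    _ = sInf {p | ∃ q ∈ {q | sh q (sh a z) ∈ M n ∧ sh q (sh a z) ∉ Mω}, p = a + q} := by
        rw [hset]
    _ = a + dep n (sh a z) := sInf_translate hne a

lemma dep_add {n : ℕ} {z : B} (hz : Aper z) :
    dep (n+1) z = dep n z + dep (n+1) (top n z) := by
  apply dep_shift hz
  intro p hp ⟨h1, h2⟩
  have := dep_min (z := z) (n := n) (M_succ_subset n h1) h2
  omega

lemma top_succ {n : ℕ} {z : B} (hz : Aper z) :
    top (n+1) z = top (n+1) (top n z) := by
  show sh (dep (n+1) z) z = sh (dep (n+1) (top n z)) (sh (dep n z) z)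
  rw [sh_sh, dep_add hz]

lemma top_mono_eq {n m : ℕ} {x y : B} (hx : Aper x) (hy : Aper y)
    (hnm : n ≤ m) (h : top n x = top n y) : top m x = top m y := by
  induction m with
  | zero => have : n = 0 := by omega
            subst this; exact h
  | succ m ih =>
    rcases Nat.eq_or_lt_of_le hnm with he | hl
    · subst he; exact h
    · have := ih (by omega)
      rw [top_succ hx, top_succ hy, this]

/-! ### escape and coverage -/

lemma escape {z : B} (hz : Aper z) (a : ℕ) :
    ∃ N, ∀ n, N ≤ n → ∀ p < a, ¬(sh p z ∈ M n ∧ sh p z ∉ Mω) := by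
  induction a with
  | zero => exact ⟨0, fun n _ p hp => by omega⟩
  | succ a ih =>
    obtain ⟨N1, hN1⟩ := ih
    by_cases hf : sh a z ∈ Mω
    · refine ⟨N1, fun n hn p hp => ?_⟩
      rcases Nat.lt_or_ge p a with h | h
      · exact hN1 n hn p h
      · have : p = a := by omega
        subst this
        rintro ⟨_, h2⟩
        exact h2 hf
    · have : ∃ n0, sh a z ∉ M n0 := by
        by_contra hc
        push_neg at hc
        exact hf (Set.mem_iInter.mpr hc)
      obtain ⟨n0, hn0⟩ := this
      refine ⟨max N1 n0, fun n hn p hp => ?_⟩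
      rcases Nat.lt_or_ge p a with h | h
      · exact hN1 n (le_trans (le_max_left _ _) hn) p h
      · have : p = a := by omega
        subst this
        rintro ⟨h1, _⟩
        exact hn0 (M_subset (le_trans (le_max_right _ _) hn) h1)

lemma coverage {x y : B} (hx : Aper x) (hy : Aper y) {a b : ℕ}
    (h : sh a x = sh b y) : ∃ n, top n x = top n y := by
  obtain ⟨N1, hN1⟩ := escape hx a
  obtain ⟨N2, hN2⟩ := escape hy b
  refine ⟨max N1 N2, ?_⟩
  have h1 : dep (max N1 N2) x = a + dep (max N1 N2) (sh a x) :=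
    dep_shift hx (hN1 _ (le_max_left _ _))
  have h2 : dep (max N1 N2) y = b + dep (max N1 N2) (sh b y) :=
    dep_shift hy (hN2 _ (le_max_right _ _))
  unfold top
  rw [h1, h2, ← sh_sh, ← sh_sh, h]

/-! ### finiteness of kernel classes -/

lemma fiber_finite (n : ℕ) (x : B) : {y : B | Aper y ∧ top n y = top n x}.Finite := by
  classical
  set K := Kb n with hK
  set Ψ : B → (Fin (K+1) → Bool) × Fin (K+1) :=
    fun y => (fun i => y i.val, ⟨min (dep n y) K, by omega⟩) with hΨ
  apply Set.Finite.of_finite_image (f := Ψ)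
  · exact Set.toFinite _
  · rintro y ⟨hy, hty⟩ y' ⟨hy', hty'⟩ he
    have hdep : dep n y ≤ K := dep_le hy
    have hdep' : dep n y' ≤ K := dep_le hy'
    have h2 : min (dep n y) K = min (dep n y') K := by
      have := congrArg Prod.snd he
      simpa [hΨ] using this
    rw [Nat.min_eq_left hdep, Nat.min_eq_left hdep'] at h2
    have hpre : ∀ k ≤ K, y k = y' k := by
      intro k hk
      have := congrArg Prod.fst he
      have h3 := congrFun (by simpa [hΨ] using this) (⟨k, by omega⟩ : Fin (K+1))
      simpa using h3
    have htail : sh (dep n y) y = sh (dep n y) y' := by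
      rw [show sh (dep n y) y = top n y from rfl, hty, ← hty', h2]
      rfl
    funext k
    rcases le_or_gt k K with h | h
    · exact hpre k h
    · have hk : dep n y ≤ k := by omega
      have := congrFun htail (k - dep n y)
      simpa [sh_apply, show dep n y + (k - dep n y) = k by omega] using this

/-! ### measurability -/

section Meas

lemma meas_coord (k : ℕ) (b : Bool) : MeasurableSet {z : B | z k = b} := by
  have h1 : Measurable (fun z : B => z k) := measurable_pi_apply k
  exact h1 (MeasurableSet.singleton b)

lemma meas_sh (d : ℕ) : Measurable (sh d) := by
  apply measurable_pi_lambda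
  intro k
  exact measurable_pi_apply (d + k)

/-- substitution of a measurable ℕ-valued function into a measurable family -/
lemma meas_bind {β : Type*} [MeasurableSpace β] {g : B → ℕ} (hg : Measurable g)
    {F : ℕ → B → β} (hF : ∀ k, Measurable (F k)) :
    Measurable (fun z => F (g z) z) := by
  intro s hs
  have : (fun z => F (g z) z) ⁻¹' s = ⋃ k : ℕ, (g ⁻¹' {k}) ∩ (F k ⁻¹' s) := by
    ext z
    simp only [Set.mem_preimage, Set.mem_iUnion, Set.mem_inter_iff, Set.mem_singleton_iff]
    constructor
    · intro h; exact ⟨g z, rfl, h⟩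
    · rintro ⟨k, hk, h⟩; subst hk; exact h
  rw [this]
  exact MeasurableSet.iUnion fun k =>
    (hg (MeasurableSet.singleton k)).inter (hF k hs)

lemma meas_sInf_pred {P : ℕ → B → Prop} (h : ∀ d, MeasurableSet {z | P d z}) :
    Measurable (fun z => sInf {d | P d z}) := by
  have key : ∀ k : ℕ, MeasurableSet ((fun z => sInf {d | P d z}) ⁻¹' {k}) := by
    intro k
    rcases Nat.eq_zero_or_pos k with h0 | hpos
    · subst h0
      have : (fun z => sInf {d | P d z}) ⁻¹' {0}
          = {z | P 0 z} ∪ {z | ∀ d, ¬ P d z} := by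
        ext z
        simp only [Set.mem_preimage, Set.mem_singleton_iff, Set.mem_union, Set.mem_setOf_eq]
        constructor
        · intro hz
          by_cases hne : ∃ d, P d z
          · left
            have := Nat.sInf_mem (s := {d | P d z}) hne
            rwa [hz] at this
          · right; push_neg at hne; exact hne
        · rintro (hz | hz)
          · exact Nat.sInf_eq_zero.mpr (Or.inl hz)
          · apply Nat.sInf_eq_zero.mpr
            right
            ext d; simp [hz d]
      rw [this]
      exact (h 0).union (by
        have : {z | ∀ d, ¬ P d z} = ⋂ d, {z | P d z}ᶜ := by
          ext z; simp
        rw [this]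
        exact MeasurableSet.iInter fun d => (h d).compl)
    · have : (fun z => sInf {d | P d z}) ⁻¹' {k}
          = {z | P k z} ∩ ⋂ j ∈ Finset.range k, {z | P j z}ᶜ := by
        ext z
        simp only [Set.mem_preimage, Set.mem_singleton_iff, Set.mem_inter_iff,
          Set.mem_setOf_eq, Set.mem_iInter, Finset.mem_range, Set.mem_compl_iff]
        constructor
        · intro hz
          constructor
          · have hne : {d | P d z}.Nonempty := by
              by_contra hc
              rw [Set.not_nonempty_iff_eq_empty] at hc
              rw [show sInf {d | P d z} = 0 by rw [hc]; exact Nat.sInf_empty] at hz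
              omega
            have := Nat.sInf_mem hne
            rwa [hz] at this
          · intro j hj hPj
            have : sInf {d | P d z} ≤ j := Nat.sInf_le hPj
            omega
        · rintro ⟨h1, h2⟩
          apply le_antisymm
          · exact Nat.sInf_le h1
          · by_contra hc
            push_neg at hc
            have hne : {d | P d z}.Nonempty := ⟨k, h1⟩
            have hm := Nat.sInf_mem hne
            exact h2 _ hc hm
      rw [this]
      exact (h k).inter (MeasurableSet.biInter (Set.to_countable _)
        (fun j _ => (h j).compl))
  exact measurable_to_countable' key

lemma meas_eq_nat {f g : B → ℕ} (hf : Measurable f) (hg : Measurable g) :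
    MeasurableSet {z | f z = g z} := by
  have : {z | f z = g z} = ⋃ k : ℕ, (f ⁻¹' {k}) ∩ (g ⁻¹' {k}) := by
    ext z; simp only [Set.mem_setOf_eq, Set.mem_iUnion, Set.mem_inter_iff,
      Set.mem_preimage, Set.mem_singleton_iff]
    constructor
    · intro h; exact ⟨f z, rfl, h.symm⟩
    · rintro ⟨k, h1, h2⟩; rw [h1, h2]
  rw [this]
  exact MeasurableSet.iUnion fun k =>
    (hf (MeasurableSet.singleton k)).inter (hg (MeasurableSet.singleton k))

lemma meas_lt_nat {f g : B → ℕ} (hf : Measurable f) (hg : Measurable g) :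
    MeasurableSet {z | f z < g z} := by
  have : {z | f z < g z} = ⋃ p : ℕ × ℕ,
      if p.1 < p.2 then (f ⁻¹' {p.1}) ∩ (g ⁻¹' {p.2}) else ∅ := by
    ext z
    simp only [Set.mem_setOf_eq, Set.mem_iUnion]
    constructor
    · intro h
      exact ⟨(f z, g z), by simp [h]⟩
    · rintro ⟨⟨a, b⟩, hp⟩
      by_cases hab : a < b
      · simp only [hab, if_true, Set.mem_inter_iff, Set.mem_preimage,
          Set.mem_singleton_iff] at hp
        omega
      · simp [hab] at hp
  rw [this]
  exact MeasurableSet.iUnion fun p => by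
    by_cases hab : p.1 < p.2
    · simp only [hab, if_true]
      exact (hf (MeasurableSet.singleton p.1)).inter (hg (MeasurableSet.singleton p.2))
    · simp [hab]

lemma meas_seq_eq (a b : ℕ) : MeasurableSet {z : B | sh a z = sh b z} := by
  have : {z : B | sh a z = sh b z} = ⋂ k : ℕ, {z : B | z (a+k) = z (b+k)} := by
    ext z
    simp only [Set.mem_setOf_eq, Set.mem_iInter]
    constructor
    · intro h k; exact congrFun h k
    · intro h; funext k; exact h k
  rw [this]
  refine MeasurableSet.iInter fun k => ?_
  have : {z : B | z (a+k) = z (b+k)}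
      = ({z : B | z (a+k) = true} ∩ {z : B | z (b+k) = true})
      ∪ ({z : B | z (a+k) = false} ∩ {z : B | z (b+k) = false}) := by
    ext z
    simp only [Set.mem_setOf_eq, Set.mem_union, Set.mem_inter_iff]
    cases h1 : z (a+k) <;> cases h2 : z (b+k) <;> simp
  rw [this]
  exact ((meas_coord _ _).inter (meas_coord _ _)).union
    ((meas_coord _ _).inter (meas_coord _ _))

lemma meas_Aper : MeasurableSet {z : B | Aper z} := by
  have : {z : B | Aper z} = ⋂ p : ℕ, ⋂ d : ℕ, ⋂ (_ : 0 < d), {z : B | sh p z = sh (p+d) z}ᶜ := by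
    ext z
    simp only [Set.mem_iInter, Set.mem_compl_iff, Set.mem_setOf_eq]
    rfl
  rw [this]
  exact MeasurableSet.iInter fun p => MeasurableSet.iInter fun d =>
    MeasurableSet.iInter fun _ => (meas_seq_eq p (p+d)).compl

lemma meas_S (p L : ℕ) : Measurable (fun z : B => S z p L) := by
  induction L generalizing p with
  | zero => simpa [S] using measurable_const
  | succ L ih =>
    show Measurable (fun z : B => (cond (z p) 1 0) + 2 * S z (p+1) L)
    apply Measurable.add
    · exact (measurable_of_countable (fun b : Bool => cond b 1 0)).comp
        (measurable_pi_apply p)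
    · exact (ih (p+1)).const_mul 2

lemma meas_bc (p L : ℕ) : Measurable (fun z : B => bc z p L) := by
  unfold bc
  exact Measurable.add measurable_const (meas_S p L)

lemma meas_bc2 {g1 g2 : B → ℕ} (h1 : Measurable g1) (h2 : Measurable g2) :
    Measurable (fun z => bc z (g1 z) (g2 z)) := by
  have := meas_bind (g := g1) h1
    (F := fun p z => bc z p (g2 z)) (fun p => by
      exact meas_bind (g := g2) h2 (F := fun L z => bc z p L) (fun L => meas_bc p L))
  exact this

end Meas

section Meas2

lemma meas_mem_sh {T : Set B} (hT : MeasurableSet T) (d : ℕ) :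
    MeasurableSet {z : B | sh d z ∈ T} := meas_sh d hT

lemma meas_nxt {T : Set B} (hT : MeasurableSet T) : Measurable (nxt T) := by
  unfold nxt
  apply meas_sInf_pred
  intro d
  by_cases hd : 0 < d
  · have : {z : B | 0 < d ∧ sh d z ∈ T} = {z : B | sh d z ∈ T} := by
      ext z; simp [hd]
    rw [this]; exact meas_mem_sh hT d
  · have : {z : B | 0 < d ∧ sh d z ∈ T} = ∅ := by
      ext z; simp [hd]
    rw [this]; exact MeasurableSet.empty

lemma meas_sh_comp {g : B → ℕ} (hg : Measurable g) :
    Measurable (fun z => sh (g z) z) :=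
  meas_bind hg (fun k => meas_sh k)

lemma meas_Q {T : Set B} (hT : MeasurableSet T) (j : ℕ) :
    Measurable (fun z => Q T z j) := by
  induction j with
  | zero => simpa [Q] using measurable_const
  | succ j ih =>
    show Measurable (fun z => Q T z j + nxt T (sh (Q T z j) z))
    exact ih.add ((meas_nxt hT).comp (meas_sh_comp ih))

lemma meas_cc {T : Set B} (hT : MeasurableSet T) (j : ℕ) :
    Measurable (fun z => cc T z j) := by
  unfold cc
  exact meas_bc2 (meas_Q hT j) ((meas_nxt hT).comp (meas_sh_comp (meas_Q hT j)))

lemma meas_U {T : Set B} (hT : MeasurableSet T) (j : ℕ) :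
    MeasurableSet {z | U T z j} := by
  unfold U
  exact meas_lt_nat (meas_cc hT j) (meas_cc hT (j+1))

lemma meas_dD {T : Set B} (hT : MeasurableSet T) (i : ℕ) :
    Measurable (fun z => dD T z i) := by
  unfold dD
  exact meas_sInf_pred fun d => (meas_U hT (i+d)).compl

lemma meas_dU {T : Set B} (hT : MeasurableSet T) (i : ℕ) :
    Measurable (fun z => dU T z i) := by
  unfold dU
  exact meas_sInf_pred fun d => meas_U hT (i+d)

lemma meas_parity {f : B → ℕ} (hf : Measurable f) : MeasurableSet {z | Odd (f z)} := by
  have : {z | Odd (f z)} = f ⁻¹' {n | Odd n} := rfl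
  rw [this]
  exact hf ((Set.to_countable _).measurableSet)

lemma meas_parity' {f : B → ℕ} (hf : Measurable f) : MeasurableSet {z | Even (f z)} := by
  have : {z | Even (f z)} = f ⁻¹' {n | Even n} := rfl
  rw [this]
  exact hf ((Set.to_countable _).measurableSet)

lemma meas_cand {T : Set B} (hT : MeasurableSet T) (i : ℕ) :
    MeasurableSet {z | cand T z i} := by
  have hset : {z | cand T z i} =
      ({z | U T z i} ∩ {z | U T z (i+1)}ᶜ)
      ∪ ({z | U T z i} ∩ {z | U T z (i+1)} ∩ {z | Odd (dD T z i)})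
      ∪ ({z | U T z i}ᶜ ∩ {z | U T z (i+1)}ᶜ ∩ {z | Even (dU T z i)}) := by
    ext z
    simp only [cand, Set.mem_union, Set.mem_inter_iff, Set.mem_compl_iff, Set.mem_setOf_eq]
    tauto
  rw [hset]
  exact (((meas_U hT i).inter (meas_U hT (i+1)).compl).union
    (((meas_U hT i).inter (meas_U hT (i+1))).inter (meas_parity (meas_dD hT i)))).union
    (((meas_U hT i).compl.inter (meas_U hT (i+1)).compl).inter
      (meas_parity' (meas_dU hT i)))

lemma meas_M (n : ℕ) : MeasurableSet (M n) := by
  induction n with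
  | zero => exact MeasurableSet.univ
  | succ n ih =>
    have hset : M (n+1) = M n ∩ ({z | cand (M n) z 0} ∩ {z | cand (M n) z 1}ᶜ) := by
      ext z
      show (z ∈ M n ∧ cand (M n) z 0 ∧ ¬ cand (M n) z 1) ↔ _
      constructor
      · rintro ⟨h1, h2, h3⟩; exact ⟨h1, h2, h3⟩
      · rintro ⟨h1, h2, h3⟩; exact ⟨h1, h2, h3⟩
    rw [hset]
    exact ih.inter ((meas_cand ih 0).inter (meas_cand ih 1).compl)

lemma meas_Mω : MeasurableSet Mω := MeasurableSet.iInter fun n => meas_M n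

lemma meas_dep (n : ℕ) : Measurable (dep n) := by
  unfold dep
  exact meas_sInf_pred fun p =>
    (meas_mem_sh (meas_M n) p).inter (meas_mem_sh meas_Mω p).compl

lemma meas_top (n : ℕ) : Measurable (top n) := meas_sh_comp (meas_dep n)

end Meas2

/-! ### tail equivalence on `B`, eventually periodic points -/

def tE (x y : B) : Prop := ∃ a b : ℕ, sh a x = sh b y

lemma tE_refl (x : B) : tE x x := ⟨0, 0, rfl⟩

lemma tE_symm {x y : B} (h : tE x y) : tE y x := by
  obtain ⟨a, b, h⟩ := h; exact ⟨b, a, h.symm⟩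

lemma sh_congr {x y : B} {a b : ℕ} (h : sh a x = sh b y) (t : ℕ) :
    sh (a+t) x = sh (b+t) y := by
  rw [← sh_sh, ← sh_sh, h]

lemma tE_trans {x y z : B} (h1 : tE x y) (h2 : tE y z) : tE x z := by
  obtain ⟨a, b, h1⟩ := h1
  obtain ⟨c, d, h2⟩ := h2
  refine ⟨a + c, d + b, ?_⟩
  have e1 := sh_congr h1 c
  have e2 := sh_congr h2 b
  rw [show b + c = c + b by omega] at e1
  rw [show c + b = c + b by omega] at e2
  rw [e1, e2]

lemma mixed_contra {x y : B} (hx : Aper x) (h : tE x y) (hy : ¬ Aper y) : False := by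
  obtain ⟨a, b, h⟩ := h
  unfold Aper at hy
  push_neg at hy
  obtain ⟨p, d, hd, hp⟩ := hy
  have e1 : sh (a + p) x = sh (b + p) y := sh_congr h p
  have e2 : sh (b + p) y = sh (b + p + d) y := by
    have := sh_congr hp b
    rw [show p + b = b + p by omega, show p + d + b = b + p + d by omega] at this
    exact this
  have e3 : sh (a + p + d) x = sh (b + p + d) y := by
    have := sh_congr h (p + d)
    rw [show a + (p+d) = a + p + d by omega, show b + (p+d) = b + p + d by omega] at this
    exact this
  exact hx (a+p) d hd (by rw [e1, e2, ← e3])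

def PW (n : ℕ) : Set B := {z | ∃ i ≤ n, ∃ d, 0 < d ∧ d ≤ n ∧ sh i z = sh (i+d) z}

lemma PW_mono {n : ℕ} : PW n ⊆ PW (n+1) := by
  rintro z ⟨i, hi, d, hd0, hd, h⟩
  exact ⟨i, by omega, d, hd0, by omega, h⟩

lemma PW_mono' {n m : ℕ} (h : n ≤ m) : PW n ⊆ PW m := by
  induction m with
  | zero => have : n = 0 := by omega
            subst this; exact subset_rfl
  | succ m ih =>
    rcases Nat.eq_or_lt_of_le h with he | hl
    · subst he; exact subset_rfl
    · exact (ih (by omega)).trans PW_mono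

lemma PW_not_aper {n : ℕ} {z : B} (h : z ∈ PW n) : ¬ Aper z := by
  obtain ⟨i, _, d, hd0, _, h⟩ := h
  intro ha
  exact ha i d hd0 h

lemma not_aper_PW {z : B} (h : ¬ Aper z) : ∃ n, z ∈ PW n := by
  unfold Aper at h
  push_neg at h
  obtain ⟨p, d, hd, hp⟩ := h
  exact ⟨p + d, p, by omega, d, hd, by omega, hp⟩

lemma meas_PW (n : ℕ) : MeasurableSet (PW n) := by
  have : PW n = ⋃ i : ℕ, ⋃ (_ : i ≤ n), ⋃ d : ℕ, ⋃ (_ : 0 < d ∧ d ≤ n),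
      {z : B | sh i z = sh (i+d) z} := by
    ext z
    simp only [PW, Set.mem_setOf_eq, Set.mem_iUnion]
    constructor
    · rintro ⟨i, hi, d, h0, hd, h⟩; exact ⟨i, hi, d, ⟨h0, hd⟩, h⟩
    · rintro ⟨i, hi, d, ⟨h0, hd⟩, h⟩; exact ⟨i, hi, d, h0, hd, h⟩
  rw [this]
  exact MeasurableSet.iUnion fun i => MeasurableSet.iUnion fun _ =>
    MeasurableSet.iUnion fun d => MeasurableSet.iUnion fun _ => meas_seq_eq i (i+d)

lemma periodic_reduce {z : B} {i d : ℕ} (hd : 0 < d) (h : sh i z = sh (i+d) z) :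
    ∀ k, z (i + k) = z (i + k % d) := by
  intro k
  induction k using Nat.strong_induction_on with
  | _ k ih =>
    rcases Nat.lt_or_ge k d with hk | hk
    · rw [Nat.mod_eq_of_lt hk]
    · have h1 : z (i + (k - d)) = z (i + d + (k - d)) := congrFun h (k - d)
      have h2 : i + d + (k - d) = i + k := by omega
      rw [h2] at h1
      have h3 := ih (k - d) (by omega)
      have h4 : (k - d) % d = k % d := by
        conv_rhs => rw [show k = (k - d) + d by omega]
        rw [Nat.add_mod_right]
      rw [← h1, h3, h4]

lemma PW_finite (n : ℕ) : (PW n).Finite := by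
  classical
  set Φ : ℕ → ℕ → (Fin (2*n+2) → Bool) → B := fun i d w =>
    (fun m => if hm : m < 2*n+2 ∧ m < i then w ⟨m, hm.1⟩
      else if hm2 : i + ((m - i) % d) < 2*n+2 then w ⟨i + ((m - i) % d), hm2⟩
      else false) with hΦ
  have hsub : PW n ⊆ ⋃ i ∈ Set.Iic n, ⋃ d ∈ Set.Iic n,
      (fun w => Φ i d w) '' Set.univ := by
    rintro z ⟨i, hi, d, hd0, hd, h⟩
    simp only [Set.mem_iUnion, Set.mem_Iic, Set.image_univ, Set.mem_range]
    refine ⟨i, hi, d, hd, fun j => z j.val, ?_⟩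
    funext m
    rw [hΦ]
    simp only
    rcases Nat.lt_or_ge m i with hm | hm
    · rw [dif_pos ⟨by omega, hm⟩]
    · rw [dif_neg (by omega)]
      have hlt : i + ((m - i) % d) < 2*n+2 := by
        have := Nat.mod_lt (m - i) hd0
        omega
      rw [dif_pos hlt]
      have := periodic_reduce hd0 h (m - i)
      rw [show i + (m - i) = m by omega] at this
      exact this.symm
  apply Set.Finite.subset _ hsub
  apply Set.Finite.biUnion (Set.finite_Iic n)
  intro i _
  apply Set.Finite.biUnion (Set.finite_Iic n)
  intro d _
  exact Set.toFinite _ |>.image _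

/-! ### the finite approximations on `B` -/

def FB (n : ℕ) (x y : B) : Prop :=
  x = y ∨ (Aper x ∧ Aper y ∧ top n x = top n y) ∨ (x ∈ PW n ∧ y ∈ PW n ∧ tE x y)

lemma FB_refl (n : ℕ) (x : B) : FB n x x := Or.inl rfl

lemma FB_symm {n : ℕ} {x y : B} (h : FB n x y) : FB n y x := by
  rcases h with h | ⟨h1, h2, h3⟩ | ⟨h1, h2, h3⟩
  · exact Or.inl h.symm
  · exact Or.inr (Or.inl ⟨h2, h1, h3.symm⟩)
  · exact Or.inr (Or.inr ⟨h2, h1, tE_symm h3⟩)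

lemma FB_trans {n : ℕ} {x y z : B} (h1 : FB n x y) (h2 : FB n y z) : FB n x z := by
  rcases h1 with h1 | ⟨ha1, ha2, ha3⟩ | ⟨hp1, hp2, hp3⟩
  · subst h1; exact h2
  · rcases h2 with h2 | ⟨hb1, hb2, hb3⟩ | ⟨hq1, hq2, hq3⟩
    · subst h2; exact Or.inr (Or.inl ⟨ha1, ha2, ha3⟩)
    · exact Or.inr (Or.inl ⟨ha1, hb2, ha3.trans hb3⟩)
    · exact absurd ha2 (PW_not_aper hq1)
  · rcases h2 with h2 | ⟨hb1, hb2, hb3⟩ | ⟨hq1, hq2, hq3⟩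
    · subst h2; exact Or.inr (Or.inr ⟨hp1, hp2, hp3⟩)
    · exact absurd hb1 (PW_not_aper hp2)
    · exact Or.inr (Or.inr ⟨hp1, hq2, tE_trans hp3 hq3⟩)

lemma FB_mono {n : ℕ} {x y : B} (h : FB n x y) : FB (n+1) x y := by
  rcases h with h | ⟨h1, h2, h3⟩ | ⟨h1, h2, h3⟩
  · exact Or.inl h
  · exact Or.inr (Or.inl ⟨h1, h2, top_mono_eq h1 h2 (by omega) h3⟩)
  · exact Or.inr (Or.inr ⟨PW_mono h1, PW_mono h2, h3⟩)

lemma FB_finite (n : ℕ) (x : B) : {y | FB n x y}.Finite := by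
  have hsub : {y | FB n x y} ⊆ {x} ∪ {y : B | Aper y ∧ top n y = top n x} ∪ PW n := by
    rintro y (h | ⟨h1, h2, h3⟩ | ⟨h1, h2, h3⟩)
    · exact Or.inl (Or.inl h.symm)
    · exact Or.inl (Or.inr ⟨h2, h3.symm⟩)
    · exact Or.inr h2
  exact Set.Finite.subset (((Set.finite_singleton x).union (fiber_finite n x)).union
    (PW_finite n)) hsub

lemma FB_to_tE {n : ℕ} {x y : B} (h : FB n x y) : tE x y := by
  rcases h with h | ⟨_, _, h3⟩ | ⟨_, _, h3⟩
  · subst h; exact tE_refl x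
  · exact ⟨dep n x, dep n y, h3⟩
  · exact h3

lemma tE_to_FB {x y : B} (h : tE x y) : ∃ n, FB n x y := by
  by_cases hx : Aper x
  · by_cases hy : Aper y
    · obtain ⟨a, b, hab⟩ := h
      obtain ⟨n, hn⟩ := coverage hx hy hab
      exact ⟨n, Or.inr (Or.inl ⟨hx, hy, hn⟩)⟩
    · exact absurd (mixed_contra hx h hy) (by simp)
  · by_cases hy : Aper y
    · exact absurd (mixed_contra hy (tE_symm h) hx) (by simp)
    · obtain ⟨n1, h1⟩ := not_aper_PW hx
      obtain ⟨n2, h2⟩ := not_aper_PW hy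
      refine ⟨max n1 n2, Or.inr (Or.inr ⟨PW_mono' (le_max_left _ _) h1,
        PW_mono' (le_max_right _ _) h2, h⟩)⟩

/-! ### measurability of the pair sets -/

lemma meas_pair_eq_coord {f g : B × B → Bool} (hf : Measurable f) (hg : Measurable g) :
    MeasurableSet {p : B × B | f p = g p} := by
  have : {p : B × B | f p = g p} =
      (f ⁻¹' {true} ∩ g ⁻¹' {true}) ∪ (f ⁻¹' {false} ∩ g ⁻¹' {false}) := by
    ext p
    simp only [Set.mem_setOf_eq, Set.mem_union, Set.mem_inter_iff, Set.mem_preimage,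
      Set.mem_singleton_iff]
    cases h1 : f p <;> cases h2 : g p <;> simp
  rw [this]
  exact ((hf (MeasurableSet.singleton _)).inter (hg (MeasurableSet.singleton _))).union
    ((hf (MeasurableSet.singleton _)).inter (hg (MeasurableSet.singleton _)))

lemma meas_pair_fun_eq {F G : B → B} (hF : Measurable F) (hG : Measurable G) :
    MeasurableSet {p : B × B | F p.1 = G p.2} := by
  have : {p : B × B | F p.1 = G p.2} = ⋂ k : ℕ, {p : B × B | F p.1 k = G p.2 k} := by
    ext p
    simp only [Set.mem_setOf_eq, Set.mem_iInter]
    constructor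
    · intro h k; exact congrFun h k
    · intro h; funext k; exact h k
  rw [this]
  refine MeasurableSet.iInter fun k => ?_
  exact meas_pair_eq_coord
    (((measurable_pi_apply k).comp hF).comp measurable_fst)
    (((measurable_pi_apply k).comp hG).comp measurable_snd)

lemma meas_singleton_B (z0 : B) : MeasurableSet {z0} := by
  have : {z0} = ⋂ k : ℕ, {z : B | z k = z0 k} := by
    ext z
    simp only [Set.mem_singleton_iff, Set.mem_iInter, Set.mem_setOf_eq]
    constructor
    · intro h k; rw [h]
    · intro h; funext k; exact h k
  rw [this]
  exact MeasurableSet.iInter fun k => meas_coord k (z0 k)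

lemma meas_finite_pairs {s : Set (B × B)} (hs : s.Finite) : MeasurableSet s := by
  have hsingle : ∀ a : B × B, MeasurableSet ({a} : Set (B × B)) := by
    intro a
    have : ({a} : Set (B × B)) = (Prod.fst ⁻¹' {a.1}) ∩ (Prod.snd ⁻¹' {a.2}) := by
      ext p
      simp only [Set.mem_singleton_iff, Set.mem_inter_iff, Set.mem_preimage,
        Set.mem_singleton_iff]
      constructor
      · intro h; rw [h]; exact ⟨rfl, rfl⟩
      · rintro ⟨h1, h2⟩
        exact Prod.ext h1 h2
    rw [this]
    exact ((meas_singleton_B a.1).preimage measurable_fst).inter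
      ((meas_singleton_B a.2).preimage measurable_snd)
  have hset : s = ⋃ a ∈ s, {a} := by simp
  rw [hset]
  exact MeasurableSet.biUnion hs.countable (fun a _ => hsingle a)

lemma meas_FB (n : ℕ) : MeasurableSet {p : B × B | FB n p.1 p.2} := by
  have hset : {p : B × B | FB n p.1 p.2} =
      {p : B × B | p.1 = p.2}
      ∪ (({p : B × B | Aper p.1} ∩ {p : B × B | Aper p.2})
          ∩ {p : B × B | top n p.1 = top n p.2})
      ∪ {p : B × B | p.1 ∈ PW n ∧ p.2 ∈ PW n ∧ tE p.1 p.2} := by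
    ext p
    simp only [FB, Set.mem_union, Set.mem_inter_iff, Set.mem_setOf_eq]
    tauto
  rw [hset]
  refine MeasurableSet.union (MeasurableSet.union ?_ ?_) ?_
  · exact meas_pair_fun_eq measurable_id measurable_id
  · exact ((meas_Aper.preimage measurable_fst).inter
      (meas_Aper.preimage measurable_snd)).inter
      (meas_pair_fun_eq (meas_top n) (meas_top n))
  · apply meas_finite_pairs
    apply Set.Finite.subset ((PW_finite n).prod (PW_finite n))
    rintro p ⟨h1, h2, _⟩
    exact ⟨h1, h2⟩

/-! ### coding a countable alphabet into `Bool` -/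

section Coding

variable {S : Type*}

def shS (a : ℕ) (x : ℕ → S) : ℕ → S := fun n => x (a + n)

def Lc (e : S → ℕ) (x : ℕ → S) : ℕ → ℕ
  | 0 => 0
  | (i+1) => Lc e x i + e (x i) + 1

def Th (e : S → ℕ) (x : ℕ → S) : B :=
  fun k => if ∃ i, Lc e x (i+1) = k + 1 then true else false

lemma Th_true_iff (e : S → ℕ) (x : ℕ → S) (k : ℕ) :
    Th e x k = true ↔ ∃ i, Lc e x (i+1) = k + 1 := by
  unfold Th
  split <;> simp_all

lemma Lc_succ_gt (e : S → ℕ) (x : ℕ → S) (i : ℕ) : Lc e x i < Lc e x (i+1) := by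
  show Lc e x i < Lc e x i + e (x i) + 1
  omega

lemma Lc_mono (e : S → ℕ) (x : ℕ → S) : StrictMono (Lc e x) :=
  strictMono_nat_of_lt_succ (Lc_succ_gt e x)

lemma Lc_ge (e : S → ℕ) (x : ℕ → S) (i : ℕ) : i ≤ Lc e x i := by
  induction i with
  | zero => simp
  | succ i ih => have := Lc_succ_gt e x i; omega

lemma Lc_add (e : S → ℕ) (x : ℕ → S) (a i : ℕ) :
    Lc e x (a + i) = Lc e x a + Lc e (shS a x) i := by
  induction i with
  | zero => simp [Lc]
  | succ i ih =>
    have h1 : Lc e x (a + i + 1) = Lc e x (a+i) + e (x (a+i)) + 1 := rfl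
    have h2 : Lc e (shS a x) (i+1) = Lc e (shS a x) i + e (shS a x i) + 1 := rfl
    have h3 : shS a x i = x (a + i) := rfl
    rw [show a + (i+1) = a + i + 1 by omega, h1, h2, h3, ih]
    omega

lemma Th_shift (e : S → ℕ) (x : ℕ → S) (a : ℕ) :
    Th e (shS a x) = sh (Lc e x a) (Th e x) := by
  funext k
  show Th e (shS a x) k = Th e x (Lc e x a + k)
  have hiff : (∃ i, Lc e (shS a x) (i+1) = k + 1)
      ↔ (∃ j, Lc e x (j+1) = Lc e x a + k + 1) := by
    constructor
    · rintro ⟨i, hi⟩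
      refine ⟨a + i, ?_⟩
      have := Lc_add e x a (i+1)
      rw [show a + (i+1) = a + i + 1 by omega] at this
      omega
    · rintro ⟨j, hj⟩
      have hja : a ≤ j := by
        by_contra hc
        have h1 : j + 1 ≤ a := by omega
        have h2 := Lc_mono e x |>.monotone h1
        omega
      refine ⟨j - a, ?_⟩
      have := Lc_add e x a (j - a + 1)
      rw [show a + (j - a + 1) = j + 1 by omega] at this
      omega
  unfold Th
  rcases Classical.em (∃ i, Lc e (shS a x) (i+1) = k + 1) with hc | hc
  · rw [if_pos hc, if_pos (hiff.mp hc)]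
  · rw [if_neg hc, if_neg (fun h2 => hc (hiff.mpr h2))]

lemma Th_first (e : S → ℕ) (x : ℕ → S) :
    (Th e x (e (x 0)) = true) ∧ ∀ k < e (x 0), Th e x k = false := by
  constructor
  · rw [Th_true_iff]
    exact ⟨0, by simp [Lc]⟩
  · intro k hk
    unfold Th
    rw [if_neg]
    rintro ⟨i, hi⟩
    have h1 : Lc e x 1 ≤ Lc e x (i+1) := Lc_mono e x |>.monotone (by omega)
    have h2 : Lc e x 1 = e (x 0) + 1 := by simp [Lc]
    omega

lemma Th_head {e : S → ℕ} (he : Function.Injective e) {x y : ℕ → S}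
    (h : Th e x = Th e y) : x 0 = y 0 := by
  apply he
  have hx := Th_first e x
  have hy := Th_first e y
  rcases Nat.lt_trichotomy (e (x 0)) (e (y 0)) with hlt | heq | hgt
  · have h1 := hy.2 _ hlt
    rw [← h] at h1
    rw [hx.1] at h1
    exact absurd h1 (by simp)
  · exact heq
  · have h1 := hx.2 _ hgt
    rw [h] at h1
    rw [hy.1] at h1
    exact absurd h1 (by simp)

lemma Th_inj {e : S → ℕ} (he : Function.Injective e) :
    Function.Injective (Th e) := by
  have key : ∀ i : ℕ, ∀ x y : ℕ → S, Th e x = Th e y → x i = y i := by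
    intro i
    induction i with
    | zero => exact fun x y h => Th_head he h
    | succ i ih =>
      intro x y h
      have h0 : x 0 = y 0 := Th_head he h
      have hsh : Th e (shS 1 x) = Th e (shS 1 y) := by
        rw [Th_shift, Th_shift, h]
        have : Lc e x 1 = Lc e y 1 := by
          show Lc e x 0 + e (x 0) + 1 = Lc e y 0 + e (y 0) + 1
          rw [h0]; simp [Lc]
        rw [this]
      have := ih (shS 1 x) (shS 1 y) hsh
      have hx : shS 1 x i = x (i+1) := by
        show x (1 + i) = x (i+1)
        congr 1; omega
      have hy : shS 1 y i = y (i+1) := by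
        show y (1 + i) = y (i+1)
        congr 1; omega
      rw [hx, hy] at this
      exact this
  intro x y h
  funext i
  exact key i x y h

lemma Th_true_unbounded (e : S → ℕ) (x : ℕ → S) (m : ℕ) :
    ∃ k, m ≤ k ∧ Th e x k = true := by
  refine ⟨Lc e x (m+1) - 1, ?_, ?_⟩
  · have := Lc_ge e x (m+1)
    omega
  · rw [Th_true_iff]
    refine ⟨m, ?_⟩
    have := Lc_ge e x (m+1)
    omega

lemma tE_Th_back {e : S → ℕ} (he : Function.Injective e) {x y : ℕ → S}
    (h : tE (Th e x) (Th e y)) : ∃ a b, shS a x = shS b y := by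
  obtain ⟨A, Bb, hAB⟩ := h
  obtain ⟨k, hk, hkt⟩ := Th_true_unbounded e x A
  set t := k - A with ht
  have h1 : Th e x (A + t) = true := by
    rw [show A + t = k by omega]
    exact hkt
  have h2 : Th e y (Bb + t) = true := by
    have e1 : sh A (Th e x) t = sh Bb (Th e y) t := by rw [hAB]
    rw [sh_apply, sh_apply] at e1
    rw [← e1]
    exact h1
  rw [Th_true_iff] at h1 h2
  obtain ⟨i0, hi0⟩ := h1
  obtain ⟨j0, hj0⟩ := h2
  refine ⟨i0 + 1, j0 + 1, Th_inj he ?_⟩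
  rw [Th_shift, Th_shift, hi0, hj0]
  have e2 : sh (A + t + 1) (Th e x) = sh (t+1) (sh A (Th e x)) := by
    rw [sh_sh, show A + (t+1) = A + t + 1 by omega]
  have e3 : sh (Bb + t + 1) (Th e y) = sh (t+1) (sh Bb (Th e y)) := by
    rw [sh_sh, show Bb + (t+1) = Bb + t + 1 by omega]
  rw [e2, e3, hAB]

lemma tE_Th_fwd (e : S → ℕ) {x y : ℕ → S} {a b : ℕ}
    (h : shS a x = shS b y) : tE (Th e x) (Th e y) := by
  refine ⟨Lc e x a, Lc e y b, ?_⟩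
  rw [← Th_shift, ← Th_shift, h]

section ThMeas

variable [MeasurableSpace S] [DiscreteMeasurableSpace S] [Countable S]

lemma meas_Lc (e : S → ℕ) (j : ℕ) : Measurable (fun x : ℕ → S => Lc e x j) := by
  induction j with
  | zero => simpa [Lc] using measurable_const
  | succ j ih =>
    show Measurable (fun x : ℕ → S => Lc e x j + e (x j) + 1)
    exact (ih.add ((measurable_of_countable e).comp (measurable_pi_apply j))).add
      measurable_const

lemma meas_Th (e : S → ℕ) : Measurable (Th e) := by
  apply measurable_pi_lambda
  intro k
  apply measurable_to_countable'
  intro b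
  have hset : (fun x : ℕ → S => Th e x k) ⁻¹' {b}
      = if b = true then ⋃ i ∈ Set.Iic k, {x : ℕ → S | Lc e x (i+1) = k + 1}
        else (⋃ i ∈ Set.Iic k, {x : ℕ → S | Lc e x (i+1) = k + 1})ᶜ := by
    have htrue : (fun x : ℕ → S => Th e x k) ⁻¹' {true}
        = ⋃ i ∈ Set.Iic k, {x : ℕ → S | Lc e x (i+1) = k + 1} := by
      ext x
      simp only [Set.mem_preimage, Set.mem_singleton_iff, Set.mem_iUnion, Set.mem_Iic,
        Set.mem_setOf_eq]
      rw [Th_true_iff]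
      constructor
      · rintro ⟨i, hi⟩
        refine ⟨i, ?_, hi⟩
        have := Lc_ge e x (i+1)
        omega
      · rintro ⟨i, _, hi⟩
        exact ⟨i, hi⟩
    cases b
    · rw [if_neg (by simp), ← htrue]
      ext x
      simp only [Set.mem_preimage, Set.mem_singleton_iff, Set.mem_compl_iff]
      cases h : Th e x k <;> simp
    · rw [if_pos rfl]
      exact htrue
  rw [hset]
  have hm : MeasurableSet (⋃ i ∈ Set.Iic k, {x : ℕ → S | Lc e x (i+1) = k + 1}) := by
    refine MeasurableSet.biUnion (Set.to_countable _) fun i _ => ?_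
    exact meas_Lc e (i+1) (MeasurableSet.singleton (k+1))
  split
  · exact hm
  · exact hm.compl

end ThMeas

end Coding

end
end ST13


open BA in
/-- For a countable set `S`, tail equivalence on `S^ℕ` is a
hyperfinite Borel equivalence relation. -/
theorem stmt13 {S : Type*} [Countable S] [MeasurableSpace S]
    [DiscreteMeasurableSpace S] :
    Equivalence (tailEquiv (α := S)) ∧
    MeasurableSet {p : (ℕ → S) × (ℕ → S) | tailEquiv p.1 p.2} ∧
    Hyperfinite (tailEquiv (α := S)) := by
  classical
  obtain ⟨e, he⟩ := Countable.exists_injective_nat S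
  have hTiff : ∀ x y : ℕ → S, tailEquiv x y ↔ ∃ a b, ST13.shS a x = ST13.shS b y := by
    intro x y
    constructor
    · rintro ⟨T0, T1, h⟩
      exact ⟨T0, T1, funext fun n => h n⟩
    · rintro ⟨a, b, h⟩
      exact ⟨a, b, fun n => congrFun h n⟩
  have hEq : Equivalence (tailEquiv (α := S)) := by
    constructor
    · intro x; exact ⟨0, 0, fun n => rfl⟩
    · rintro x y ⟨T0, T1, h⟩; exact ⟨T1, T0, fun n => (h n).symm⟩
    · rintro x y z ⟨T0, T1, h1⟩ ⟨U0, U1, h2⟩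
      refine ⟨T0 + U0, U1 + T1, fun n => ?_⟩
      have a1 := h1 (U0 + n)
      have a2 := h2 (T1 + n)
      calc x (T0 + U0 + n) = x (T0 + (U0 + n)) := by rw [show T0 + U0 + n = T0 + (U0+n) by omega]
        _ = y (T1 + (U0 + n)) := a1
        _ = y (U0 + (T1 + n)) := by rw [show T1 + (U0+n) = U0 + (T1+n) by omega]
        _ = z (U1 + (T1 + n)) := a2
        _ = z (U1 + T1 + n) := by rw [show U1 + (T1+n) = U1 + T1 + n by omega]
  refine ⟨hEq, ?_, ?_⟩
  · have hset : {p : (ℕ → S) × (ℕ → S) | tailEquiv p.1 p.2}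
        = ⋃ T0 : ℕ, ⋃ T1 : ℕ, ⋂ n : ℕ,
          {p : (ℕ → S) × (ℕ → S) | p.1 (T0+n) = p.2 (T1+n)} := by
      ext p
      simp only [Set.mem_setOf_eq, Set.mem_iUnion, Set.mem_iInter]
      exact Iff.rfl
    rw [hset]
    refine MeasurableSet.iUnion fun T0 => MeasurableSet.iUnion fun T1 =>
      MeasurableSet.iInter fun n => ?_
    have h2 : {p : (ℕ → S) × (ℕ → S) | p.1 (T0+n) = p.2 (T1+n)}
        = ⋃ s : S, ({p : (ℕ → S) × (ℕ → S) | p.1 (T0+n) = s}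
            ∩ {p : (ℕ → S) × (ℕ → S) | p.2 (T1+n) = s}) := by
      ext p
      simp only [Set.mem_setOf_eq, Set.mem_iUnion, Set.mem_inter_iff]
      constructor
      · intro h; exact ⟨p.2 (T1+n), h, rfl⟩
      · rintro ⟨s, h1, h2⟩; rw [h1, h2]
    rw [h2]
    refine MeasurableSet.iUnion fun s => MeasurableSet.inter ?_ ?_
    · have hm : MeasurableSet ({s} : Set S) := MeasurableSet.singleton s
      have hf : Measurable (fun p : (ℕ → S) × (ℕ → S) => p.1 (T0+n)) :=
        (measurable_pi_apply (T0+n)).comp measurable_fst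
      exact hf hm
    · have hm : MeasurableSet ({s} : Set S) := MeasurableSet.singleton s
      have hf : Measurable (fun p : (ℕ → S) × (ℕ → S) => p.2 (T1+n)) :=
        (measurable_pi_apply (T1+n)).comp measurable_snd
      exact hf hm
  · refine ⟨fun n x y => ST13.FB n (ST13.Th e x) (ST13.Th e y), ?_, ?_, ?_⟩
    · intro n
      refine ⟨⟨fun x => ST13.FB_refl n _, fun h => ST13.FB_symm h, fun h1 h2 => ST13.FB_trans h1 h2⟩, ?_, ?_⟩
      · have hset : {p : (ℕ → S) × (ℕ → S) | ST13.FB n (ST13.Th e p.1) (ST13.Th e p.2)}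
            = (fun p : (ℕ → S) × (ℕ → S) => (ST13.Th e p.1, ST13.Th e p.2))
              ⁻¹' {q : ST13.B × ST13.B | ST13.FB n q.1 q.2} := rfl
        rw [hset]
        exact (((ST13.meas_Th e).comp measurable_fst).prodMk
          ((ST13.meas_Th e).comp measurable_snd)) (ST13.meas_FB n)
      · intro x
        have hset : {y | ST13.FB n (ST13.Th e x) (ST13.Th e y)}
            = ST13.Th e ⁻¹' {w | ST13.FB n (ST13.Th e x) w} := rfl
        rw [hset]
        exact Set.Finite.preimage ((ST13.Th_inj he).injOn)
          (ST13.FB_finite n (ST13.Th e x))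
    · intro n x y h
      exact ST13.FB_mono h
    · intro x y
      rw [hTiff]
      constructor
      · rintro ⟨a, b, h⟩
        exact ST13.tE_to_FB (ST13.tE_Th_fwd e h)
      · rintro ⟨n, h⟩
        exact ST13.tE_Th_back he (ST13.FB_to_tE h)
end
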